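/- arXiv:2304.14262 — 2 statements merged into one kernel-verified Lean document; each statement's English description precedes it below -/
import Mathlib

section
/- For every market with truncated additive valuations there exists a competitive price vector p* that is componentwise minimum among all competitive price vectors, i.e. p* is competitive and for every competitive price vector q and every object i one has p*(i) ≤ q(i); in particular the componentwise minimum competitive price vector exists and is unique. -/
open Finset

section MarketDefs

variable {Ω N : Type*}

/-- A bundle for a buyer with demand `dj`: at most `b i` copies of each object,
at most `dj` items in total. -/
def IsBundle [Fintype Ω] (b : Ω → ℕ) (dj : ℕ) (y : Ω → ℕ) : Prop :=
  (∀ i, y i ≤ b i) ∧ ∑ i, y i ≤ dj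

/-- Utility of bundle `y` at prices `p` for a buyer with per-unit valuations `v`. -/
noncomputable def utility [Fintype Ω] (v : Ω → ℕ) (p : Ω → ℝ) (y : Ω → ℕ) : ℝ :=
  ∑ i, ((v i : ℝ) - p i) * (y i : ℝ)

/-- `y` is a preferred bundle (member of the demand set `D_j(p)`). -/
def InDemand [Fintype Ω] (b : Ω → ℕ) (dj : ℕ) (v : Ω → ℕ) (p : Ω → ℝ) (y : Ω → ℕ) : Prop :=
  IsBundle b dj y ∧ ∀ z, IsBundle b dj z → utility v p z ≤ utility v p y

/-- Feasible allocation. -/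
def Feasible [Fintype Ω] [Fintype N] (b : Ω → ℕ) (d : N → ℕ) (x : Ω → N → ℕ) : Prop :=
  (∀ i, ∑ j, x i j ≤ b i) ∧ ∀ j, ∑ i, x i j ≤ d j

/-- Stable allocation at prices `p`: feasible, and every buyer gets a preferred bundle. -/
def Stable [Fintype Ω] [Fintype N] (b : Ω → ℕ) (d : N → ℕ) (v : Ω → N → ℕ)
    (p : Ω → ℝ) (x : Ω → N → ℕ) : Prop :=
  Feasible b d x ∧ ∀ j, InDemand b (d j) (fun i => v i j) p (fun i => x i j)

/-- Competitive price vector: nonnegative, and some allocation is stable for it. -/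
def Competitive [Fintype Ω] [Fintype N] (b : Ω → ℕ) (d : N → ℕ) (v : Ω → N → ℕ)
    (p : Ω → ℝ) : Prop :=
  (∀ i, 0 ≤ p i) ∧ ∃ x, Stable b d v p x

/-- Walrasian price vector: some stable allocation sells as much as possible. -/
def Walrasian [Fintype Ω] [Fintype N] (b : Ω → ℕ) (d : N → ℕ) (v : Ω → N → ℕ)
    (p : Ω → ℝ) : Prop :=
  (∀ i, 0 ≤ p i) ∧ ∃ x, Stable b d v p x ∧
    ∑ i, ∑ j, x i j = min (∑ i, b i) (∑ j, d j)

/-- Componentwise minimum Walrasian price vector. -/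
def MinWalrasian [Fintype Ω] [Fintype N] (b : Ω → ℕ) (d : N → ℕ) (v : Ω → N → ℕ)
    (p : Ω → ℝ) : Prop :=
  Walrasian b d v p ∧ ∀ q, Walrasian b d v q → ∀ i, p i ≤ q i

end MarketDefs

section Buyer
variable {Ω : Type*} [Fintype Ω] [DecidableEq Ω]
variable (b : Ω → ℕ) (dj : ℕ) (v : Ω → ℕ)

def Bset : Finset (Ω → ℕ) :=
  (Fintype.piFinset fun i => Finset.range (b i + 1)).filter fun y => ∑ i, y i ≤ dj

lemma mem_Bset {y : Ω → ℕ} : y ∈ Bset b dj ↔ IsBundle b dj y := by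
  simp [Bset, IsBundle, Fintype.mem_piFinset, Nat.lt_succ_iff]

lemma Bset_nonempty : (Bset b dj).Nonempty :=
  ⟨fun _ => 0, (mem_Bset b dj).2 ⟨fun i => Nat.zero_le _, by simp⟩⟩

noncomputable def ubest (p : Ω → ℝ) : ℝ :=
  (Bset b dj).sup' (Bset_nonempty b dj) (utility v p)

variable {b dj v}

lemma utility_le_ubest {p : Ω → ℝ} {y : Ω → ℕ} (hy : IsBundle b dj y) :
    utility v p y ≤ ubest b dj v p :=
  Finset.le_sup' _ ((mem_Bset b dj).2 hy)

lemma exists_ubest (p : Ω → ℝ) :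
    ∃ y, IsBundle b dj y ∧ utility v p y = ubest b dj v p := by
  obtain ⟨y, hy, h⟩ := Finset.exists_mem_eq_sup' (Bset_nonempty b dj) (utility v p)
  exact ⟨y, (mem_Bset b dj).1 hy, h.symm⟩

lemma inDemand_iff {p : Ω → ℝ} {y : Ω → ℕ} :
    InDemand b dj v p y ↔ IsBundle b dj y ∧ utility v p y = ubest b dj v p := by
  constructor
  · rintro ⟨h1, h2⟩
    refine ⟨h1, le_antisymm (utility_le_ubest h1) ?_⟩
    obtain ⟨z, hz, hz2⟩ := exists_ubest (b := b) (dj := dj) (v := v) p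
    rw [← hz2]; exact h2 z hz
  · rintro ⟨h1, h2⟩
    exact ⟨h1, fun z hz => h2 ▸ utility_le_ubest hz⟩

lemma utility_update (p : Ω → ℝ) (y : Ω → ℕ) (i : Ω) (m : ℕ) :
    utility v p (Function.update y i m)
      = utility v p y + ((v i : ℝ) - p i) * ((m : ℝ) - (y i : ℝ)) := by
  unfold utility
  have key : ∀ k, ((v k : ℝ) - p k) * ((Function.update y i m k : ℕ) : ℝ)
      = ((v k : ℝ) - p k) * (y k : ℝ)
        + (if k = i then ((v i : ℝ) - p i) * ((m : ℝ) - (y i : ℝ)) else 0) := by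
    intro k
    by_cases hk : k = i
    · subst hk; rw [Function.update_self]; simp; ring
    · rw [Function.update_of_ne hk]; simp [hk]
  rw [Finset.sum_congr rfl (fun k _ => key k), Finset.sum_add_distrib,
    Finset.sum_ite_eq' univ i]
  simp

lemma sum_update_nat (f : Ω → ℕ) (i : Ω) (m : ℕ) :
    ∑ k, Function.update f i m k = ∑ k ∈ univ.erase i, f k + m := by
  rw [← Finset.sum_erase_add _ _ (Finset.mem_univ i), Function.update_self]
  congr 1
  exact Finset.sum_congr rfl fun k hk => Function.update_of_ne (Finset.ne_of_mem_erase hk) _ _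

lemma sum_split_two {f : Ω → ℕ} {i k : Ω} (h : i ≠ k) :
    ∑ x, f x = ∑ x ∈ (univ.erase i).erase k, f x + f k + f i := by
  rw [← Finset.sum_erase_add _ _ (Finset.mem_univ i)]
  congr 1
  rw [← Finset.sum_erase_add _ _ (Finset.mem_erase.2 ⟨h.symm, Finset.mem_univ k⟩)]

/-- optimal bundles contain no negative-margin items. -/
lemma opt_drop {p : Ω → ℝ} {y : Ω → ℕ} (hy : InDemand b dj v p y) {i : Ω}
    (h : (v i : ℝ) - p i < 0) : y i = 0 := by
  by_contra h0
  have hyi : 0 < y i := Nat.pos_of_ne_zero h0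
  have hbundle : IsBundle b dj (Function.update y i 0) := by
    refine ⟨fun k => ?_, le_trans (Finset.sum_le_sum fun k _ => ?_) hy.1.2⟩
    · by_cases hk : k = i
      · subst hk; simp
      · rw [Function.update_of_ne hk]; exact hy.1.1 k
    · by_cases hk : k = i
      · subst hk; simp
      · rw [Function.update_of_ne hk]
  have hle := hy.2 _ hbundle
  rw [utility_update] at hle
  push_cast at hle
  have : (0 : ℝ) < (y i : ℝ) := by exact_mod_cast hyi
  nlinarith

/-- if demand unfilled, positive-margin goods are taken fully. -/
lemma opt_add {p : Ω → ℝ} {y : Ω → ℕ} (hy : InDemand b dj v p y)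
    (hsum : ∑ i, y i < dj) {i : Ω} (h : 0 < (v i : ℝ) - p i) : y i = b i := by
  by_contra h0
  have hlt : y i < b i := lt_of_le_of_ne (hy.1.1 i) h0
  have hbundle : IsBundle b dj (Function.update y i (y i + 1)) := by
    refine ⟨fun k => ?_, ?_⟩
    · by_cases hk : k = i
      · subst hk; simpa using hlt
      · rw [Function.update_of_ne hk]; exact hy.1.1 k
    · rw [sum_update_nat]
      have := Finset.sum_erase_add univ y (Finset.mem_univ i)
      omega
  have hle := hy.2 _ hbundle
  rw [utility_update] at hle
  push_cast at hle
  nlinarith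

/-- exchange: a held item is never worse than an unfilled one. -/
lemma opt_swap {p : Ω → ℝ} {y : Ω → ℕ} (hy : InDemand b dj v p y) {i k : Ω}
    (hk : 0 < y k) (h : (v k : ℝ) - p k < (v i : ℝ) - p i) : y i = b i := by
  by_contra h0
  have hik : i ≠ k := by rintro rfl; exact lt_irrefl _ h
  have hlt : y i < b i := lt_of_le_of_ne (hy.1.1 i) h0
  set y1 := Function.update y k (y k - 1) with hy1
  set y2 := Function.update y1 i (y i + 1) with hy2
  have hy1i : y1 i = y i := Function.update_of_ne hik _ _
  have hbundle : IsBundle b dj y2 := by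
    refine ⟨fun x => ?_, ?_⟩
    · by_cases hx : x = i
      · subst hx; rw [hy2, Function.update_self]; omega
      · rw [hy2, Function.update_of_ne hx]
        by_cases hxk : x = k
        · subst hxk; rw [hy1, Function.update_self]; exact le_trans (Nat.sub_le _ _) (hy.1.1 x)
        · rw [hy1, Function.update_of_ne hxk]; exact hy.1.1 x
    · have e1 : ∑ x, y2 x = ∑ x ∈ (univ.erase i).erase k, y2 x + y2 k + y2 i :=
        sum_split_two hik
      have e2 : ∑ x, y x = ∑ x ∈ (univ.erase i).erase k, y x + y k + y i :=
        sum_split_two hik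
      have e3 : ∑ x ∈ (univ.erase i).erase k, y2 x = ∑ x ∈ (univ.erase i).erase k, y x := by
        refine Finset.sum_congr rfl fun x hx => ?_
        have hxk := Finset.ne_of_mem_erase hx
        have hxi := Finset.ne_of_mem_erase (Finset.mem_of_mem_erase hx)
        rw [hy2, Function.update_of_ne hxi, hy1, Function.update_of_ne hxk]
      have hk2 : y2 k = y k - 1 := by
        rw [hy2, Function.update_of_ne (Ne.symm hik), hy1, Function.update_self]
      have hi2 : y2 i = y i + 1 := by rw [hy2, Function.update_self]
      have := hy.1.2
      omega
  have hle := hy.2 _ hbundle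
  have hu2 : utility v p y2 = utility v p y + (((v i : ℝ) - p i) - ((v k : ℝ) - p k)) := by
    rw [hy2, utility_update, hy1, utility_update, Function.update_of_ne hik]
    have h1k : ((y k - 1 : ℕ) : ℝ) = (y k : ℝ) - 1 := by
      have h1 : 1 ≤ y k := hk
      push_cast [Nat.cast_sub h1]; ring
    rw [h1k]; push_cast; ring
  rw [hu2] at hle
  nlinarith

end Buyer

section Buyer2
open Finset
variable {Ω : Type*} [Fintype Ω] [DecidableEq Ω]
variable (b : Ω → ℕ) (v : Ω → ℕ) (p : Ω → ℝ)

set_option linter.unusedSectionVars false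
set_option linter.unusedVariables false

/-- goods with margin ≥ t -/
noncomputable def Sge (t : ℝ) : Finset Ω := univ.filter fun i => t ≤ (v i : ℝ) - p i
/-- goods with margin > t -/
noncomputable def Sgt (t : ℝ) : Finset Ω := univ.filter fun i => t < (v i : ℝ) - p i

def bsum (S : Finset Ω) : ℕ := ∑ i ∈ S, b i

variable {b v p}

lemma mem_Sge {t : ℝ} {i : Ω} : i ∈ Sge v p t ↔ t ≤ (v i : ℝ) - p i := by simp [Sge]
lemma mem_Sgt {t : ℝ} {i : Ω} : i ∈ Sgt v p t ↔ t < (v i : ℝ) - p i := by simp [Sgt]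

lemma Sgt_subset_Sge {t : ℝ} : Sgt v p t ⊆ Sge v p t := fun i hi =>
  mem_Sge.2 (le_of_lt (mem_Sgt.1 hi))

lemma bsum_mono {S T : Finset Ω} (h : S ⊆ T) : bsum b S ≤ bsum b T :=
  Finset.sum_le_sum_of_subset h

variable {dj : ℕ}

lemma exists_thresh (hex : dj ≤ bsum b (Sgt v p 0)) (hd : 0 < dj) :
    ∃ t : ℝ, 0 < t ∧ dj ≤ bsum b (Sge v p t) ∧ bsum b (Sgt v p t) < dj ∧
      ∃ i : Ω, (v i : ℝ) - p i = t := by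
  classical
  set V : Finset ℝ := (univ.image fun i => (v i : ℝ) - p i).filter
    (fun t => 0 < t ∧ dj ≤ bsum b (Sge v p t)) with hV
  have step : ∀ t : ℝ, 0 ≤ t → dj ≤ bsum b (Sgt v p t) → ∃ t' ∈ V, t < t' := by
    intro t ht h
    have hne : (Sgt v p t).Nonempty := by
      rcases Finset.eq_empty_or_nonempty (Sgt v p t) with he | hne
      · rw [he] at h; simp [bsum] at h; omega
      · exact hne
    set t' := (Sgt v p t).inf' hne (fun i => (v i : ℝ) - p i) with ht'
    have htt' : t < t' := by
      rw [ht', Finset.lt_inf'_iff]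
      exact fun i hi => mem_Sgt.1 hi
    obtain ⟨i0, hi0, hinf⟩ := Finset.exists_mem_eq_inf' hne (fun i => (v i : ℝ) - p i)
    have hsub : Sgt v p t ⊆ Sge v p t' := fun i hi =>
      mem_Sge.2 (Finset.inf'_le _ hi)
    refine ⟨t', ?_, htt'⟩
    rw [hV, Finset.mem_filter]
    exact ⟨by rw [ht', hinf]; exact Finset.mem_image_of_mem _ (mem_univ i0),
      lt_of_le_of_lt ht htt', le_trans h (bsum_mono hsub)⟩
  obtain ⟨t0, ht0V, _⟩ := step 0 le_rfl hex
  have hVne : V.Nonempty := ⟨t0, ht0V⟩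
  set t := V.max' hVne with htdef
  have htV : t ∈ V := V.max'_mem hVne
  rw [hV, Finset.mem_filter] at htV
  obtain ⟨htim, htpos, htge⟩ := htV
  refine ⟨t, htpos, htge, ?_, ?_⟩
  · by_contra hcon
    push_neg at hcon
    obtain ⟨t', ht'V, htt'⟩ := step t (le_of_lt htpos) hcon
    exact absurd (V.le_max' t' ht'V) (not_le.2 htt')
  · obtain ⟨i, _, hi⟩ := Finset.mem_image.1 htim
    exact ⟨i, hi⟩

variable {b : Ω → ℕ} {dj : ℕ} {v : Ω → ℕ} {p : Ω → ℝ} {y : Ω → ℕ}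

/-- in the "exact" case the whole demand is used. -/
lemma opt_sum_eq (hy : InDemand b dj v p y) (hex : dj ≤ bsum b (Sgt v p 0)) :
    ∑ i, y i = dj := by
  rcases eq_or_lt_of_le hy.1.2 with h | h
  · exact h
  · exfalso
    have hfull : ∀ i ∈ Sgt v p 0, y i = b i := fun i hi =>
      opt_add hy h (mem_Sgt.1 hi)
    have h1 : bsum b (Sgt v p 0) ≤ ∑ i, y i := by
      calc bsum b (Sgt v p 0) = ∑ i ∈ Sgt v p 0, y i :=
            (Finset.sum_congr rfl hfull).symm
        _ ≤ ∑ i, y i := Finset.sum_le_sum_of_subset (Finset.subset_univ _)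
    omega

/-- exact case: all goods with margin strictly above the threshold are taken fully. -/
lemma opt_full_above (hy : InDemand b dj v p y) (htpos : (0:ℝ) < t)
    (hge : dj ≤ bsum b (Sge v p t)) (hgt : bsum b (Sgt v p t) < dj)
    {i : Ω} (hi : t < (v i : ℝ) - p i) : y i = b i := by
  have hex : dj ≤ bsum b (Sgt v p 0) :=
    le_trans hge (bsum_mono (fun k hk => mem_Sgt.2 (lt_of_lt_of_le htpos (mem_Sge.1 hk))))
  have hsum := opt_sum_eq hy hex
  by_contra h0
  have hlt : y i < b i := lt_of_le_of_ne (hy.1.1 i) h0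
  by_cases hsw : ∃ k, 0 < y k ∧ (v k : ℝ) - p k < (v i : ℝ) - p i
  · obtain ⟨k, hk1, hk2⟩ := hsw
    exact h0 (opt_swap hy hk1 hk2)
  · push_neg at hsw
    -- support of y is inside Sge (mg i) ⊆ Sgt t
    have hsupp : ∀ k, 0 < y k → k ∈ Sge v p ((v i : ℝ) - p i) := fun k hk =>
      mem_Sge.2 (hsw k hk)
    set S := Sge v p ((v i : ℝ) - p i) with hS
    have hiS : i ∈ S := mem_Sge.2 le_rfl
    have h1 : ∑ k, y k = ∑ k ∈ S, y k := by
      rw [← Finset.sum_filter_add_sum_filter_not univ (fun k => k ∈ S) y]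
      have : ∑ k ∈ univ.filter (fun k => k ∉ S), y k = 0 := by
        refine Finset.sum_eq_zero fun k hk => ?_
        rcases Nat.eq_zero_or_pos (y k) with h | h
        · exact h
        · exact absurd (hsupp k h) (Finset.mem_filter.1 hk).2
      rw [this, add_zero]
      exact Finset.sum_congr (by ext k; simp) (fun _ _ => rfl)
    have h2 : ∑ k ∈ S, y k + b i ≤ bsum b S + y i := by
      have e1 := Finset.sum_erase_add S y hiS
      have e2 := Finset.sum_erase_add S b hiS
      have h3 : ∑ k ∈ S.erase i, y k ≤ ∑ k ∈ S.erase i, b k :=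
        Finset.sum_le_sum fun k _ => hy.1.1 k
      unfold bsum
      omega
    have h3 : bsum b S ≤ bsum b (Sgt v p t) :=
      bsum_mono fun k hk => mem_Sgt.2 (lt_of_lt_of_le hi (mem_Sge.1 hk))
    omega

/-- exact case: the support consists only of goods with margin ≥ threshold. -/
lemma opt_support (hy : InDemand b dj v p y) (htpos : (0:ℝ) < t)
    (hge : dj ≤ bsum b (Sge v p t)) (hgt : bsum b (Sgt v p t) < dj)
    {k : Ω} (hk : 0 < y k) : t ≤ (v k : ℝ) - p k := by
  by_contra hcon
  push_neg at hcon
  have hex : dj ≤ bsum b (Sgt v p 0) :=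
    le_trans hge (bsum_mono (fun x hx => mem_Sgt.2 (lt_of_lt_of_le htpos (mem_Sge.1 hx))))
  have hsum := opt_sum_eq hy hex
  have hkS : k ∉ Sge v p t := fun h => absurd (mem_Sge.1 h) (not_le.2 hcon)
  -- there is an unfilled good in Sge t
  have hex2 : ∃ i ∈ Sge v p t, y i < b i := by
    by_contra hall
    push_neg at hall
    have hfull : ∀ i ∈ Sge v p t, y i = b i := fun i hi =>
      le_antisymm (hy.1.1 i) (hall i hi)
    have h1 : ∑ i ∈ Sge v p t, y i = bsum b (Sge v p t) := Finset.sum_congr rfl hfull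
    have h2 : ∑ i ∈ insert k (Sge v p t), y i ≤ ∑ i, y i :=
      Finset.sum_le_sum_of_subset (Finset.subset_univ _)
    rw [Finset.sum_insert hkS] at h2
    omega
  obtain ⟨i, hiS, hilt⟩ := hex2
  exact absurd (opt_swap hy hk (lt_of_lt_of_le hcon (mem_Sge.1 hiS))) (Nat.ne_of_lt hilt)

/-- exact case: count of threshold-level goods taken. -/
lemma opt_T_count (hy : InDemand b dj v p y) (htpos : (0:ℝ) < t)
    (hge : dj ≤ bsum b (Sge v p t)) (hgt : bsum b (Sgt v p t) < dj) :
    ∑ i ∈ Sge v p t \ Sgt v p t, y i + bsum b (Sgt v p t) = dj := by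
  have hex : dj ≤ bsum b (Sgt v p 0) :=
    le_trans hge (bsum_mono (fun x hx => mem_Sgt.2 (lt_of_lt_of_le htpos (mem_Sge.1 hx))))
  have hsum := opt_sum_eq hy hex
  have h1 : ∑ k, y k = ∑ k ∈ Sge v p t, y k := by
    rw [← Finset.sum_filter_add_sum_filter_not univ (fun k => k ∈ Sge v p t) y]
    have h0 : ∑ k ∈ univ.filter (fun k => k ∉ Sge v p t), y k = 0 := by
      refine Finset.sum_eq_zero fun k hk => ?_
      rcases Nat.eq_zero_or_pos (y k) with h | h
      · exact h
      · exact absurd (mem_Sge.2 (opt_support hy htpos hge hgt h))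
          (Finset.mem_filter.1 hk).2
    rw [h0, add_zero]
    exact Finset.sum_congr (by ext k; simp) (fun _ _ => rfl)
  have h2 : ∑ k ∈ Sge v p t, y k
      = ∑ k ∈ Sge v p t \ Sgt v p t, y k + ∑ k ∈ Sgt v p t, y k :=
    (Finset.sum_sdiff Sgt_subset_Sge).symm
  have h3 : ∑ k ∈ Sgt v p t, y k = bsum b (Sgt v p t) :=
    Finset.sum_congr rfl fun i hi => opt_full_above hy htpos hge hgt (mem_Sgt.1 hi)
  omega

/-- flexible case: all positive-margin goods are taken fully. -/
lemma opt_full_flex (hy : InDemand b dj v p y) (hflex : bsum b (Sgt v p 0) < dj)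
    {i : Ω} (hi : (0:ℝ) < (v i : ℝ) - p i) : y i = b i := by
  by_contra h0
  rcases eq_or_lt_of_le hy.1.2 with hsum | hsum
  · -- full demand: find a nonpositive-margin held good and swap
    have hex2 : ∃ k, 0 < y k ∧ (v k : ℝ) - p k ≤ 0 := by
      by_contra hall
      push_neg at hall
      have hsupp : ∀ k, 0 < y k → k ∈ Sgt v p 0 := fun k hk =>
        mem_Sgt.2 (hall k hk)
      have h1 : ∑ k, y k ≤ bsum b (Sgt v p 0) := by
        rw [← Finset.sum_filter_add_sum_filter_not univ (fun k => k ∈ Sgt v p 0) y]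
        have h0' : ∑ k ∈ univ.filter (fun k => k ∉ Sgt v p 0), y k = 0 := by
          refine Finset.sum_eq_zero fun k hk => ?_
          rcases Nat.eq_zero_or_pos (y k) with h | h
          · exact h
          · exact absurd (hsupp k h) (Finset.mem_filter.1 hk).2
        rw [h0', add_zero]
        have : univ.filter (fun k => k ∈ Sgt v p 0) = Sgt v p 0 := by ext k; simp
        rw [this]
        exact Finset.sum_le_sum fun k _ => hy.1.1 k
      omega
    obtain ⟨k, hk1, hk2⟩ := hex2
    exact h0 (opt_swap hy hk1 (lt_of_le_of_lt hk2 hi))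
  · exact h0 (opt_add hy hsum hi)

/-- zero-demand case: the zero bundle is optimal; indeed every bundle equals 0. -/
lemma opt_zero (hd : dj = 0) {z : Ω → ℕ} (hz : IsBundle b dj z) : ∀ i, z i = 0 := by
  intro i
  have h1 : ∑ k, z k = 0 := le_antisymm (hd ▸ hz.2) (Nat.zero_le _)
  exact Finset.sum_eq_zero_iff.1 h1 i (mem_univ i)

/-- Sufficiency: the three conditions imply optimality. -/
lemma opt_of_conditions (hb : IsBundle b dj y)
    (c1 : ∀ i, 0 < y i → 0 ≤ (v i : ℝ) - p i)
    (c2 : ∑ i, y i = dj ∨ ∀ i, 0 < (v i : ℝ) - p i → y i = b i)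
    (c3 : ∀ i k, 0 < y k → (v k : ℝ) - p k < (v i : ℝ) - p i → y i = b i) :
    InDemand b dj v p y := by
  refine ⟨hb, fun z hz => ?_⟩
  rcases c2 with hsum | hfull
  · -- full-demand case
    by_cases hne : (univ.filter fun k => 0 < y k).Nonempty
    · set t0 := (univ.filter fun k => 0 < y k).inf' hne (fun k => (v k : ℝ) - p k) with ht0
      obtain ⟨k0, hk0, hk0e⟩ :=
        Finset.exists_mem_eq_inf' hne (fun k => (v k : ℝ) - p k)
      have ht0pos : 0 ≤ t0 := by
        rw [ht0, hk0e]; exact c1 k0 (Finset.mem_filter.1 hk0).2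
      have hsuppt0 : ∀ k, 0 < y k → t0 ≤ (v k : ℝ) - p k := fun k hk =>
        Finset.inf'_le _ (Finset.mem_filter.2 ⟨mem_univ k, hk⟩)
      have hfullt0 : ∀ i, t0 < (v i : ℝ) - p i → y i = b i := by
        intro i hi
        refine c3 i k0 (Finset.mem_filter.1 hk0).2 ?_
        rw [← hk0e, ← ht0]; exact hi
      have hterm : ∀ i, (((v i : ℝ) - p i) - t0) * ((z i : ℝ) - (y i : ℝ)) ≤ 0 := by
        intro i
        rcases lt_trichotomy ((v i : ℝ) - p i) t0 with h | h | h
        · have hyi : y i = 0 := by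
            by_contra h0
            exact absurd (hsuppt0 i (Nat.pos_of_ne_zero h0)) (not_le.2 h)
          rw [hyi]
          have : (0:ℝ) ≤ (z i : ℝ) := Nat.cast_nonneg _
          push_cast
          nlinarith
        · rw [h]; simp
        · have hyi : y i = b i := hfullt0 i h
          have : (z i : ℝ) ≤ (y i : ℝ) := by
            rw [hyi]; exact_mod_cast hz.1 i
          nlinarith
      have hzsum : (∑ i, (z i : ℝ)) ≤ ∑ i, (y i : ℝ) := by
        push_cast
        exact_mod_cast (by rw [hsum]; exact hz.2 : ∑ i, z i ≤ ∑ i, y i)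
      have key : utility v p z - utility v p y
          = (∑ i, (((v i : ℝ) - p i) - t0) * ((z i : ℝ) - (y i : ℝ)))
            + t0 * ((∑ i, (z i : ℝ)) - ∑ i, (y i : ℝ)) := by
        unfold utility
        calc (∑ i, ((v i : ℝ) - p i) * (z i : ℝ)) - ∑ i, ((v i : ℝ) - p i) * (y i : ℝ)
            = ∑ i, (((v i : ℝ) - p i) * (z i : ℝ) - ((v i : ℝ) - p i) * (y i : ℝ)) := by
              rw [← Finset.sum_sub_distrib]
          _ = ∑ i, ((((v i : ℝ) - p i) - t0) * ((z i : ℝ) - (y i : ℝ))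
                + (t0 * (z i : ℝ) - t0 * (y i : ℝ))) :=
              Finset.sum_congr rfl fun i _ => by ring
          _ = (∑ i, (((v i : ℝ) - p i) - t0) * ((z i : ℝ) - (y i : ℝ)))
                + ((∑ i, t0 * (z i : ℝ)) - ∑ i, t0 * (y i : ℝ)) := by
              rw [Finset.sum_add_distrib, Finset.sum_sub_distrib]
          _ = (∑ i, (((v i : ℝ) - p i) - t0) * ((z i : ℝ) - (y i : ℝ)))
                + t0 * ((∑ i, (z i : ℝ)) - ∑ i, (y i : ℝ)) := by
              rw [← Finset.mul_sum, ← Finset.mul_sum]; ring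
      have h1 : (∑ i, (((v i : ℝ) - p i) - t0) * ((z i : ℝ) - (y i : ℝ))) ≤ 0 :=
        Finset.sum_nonpos fun i _ => hterm i
      nlinarith [key, h1, mul_nonneg ht0pos (sub_nonneg.2 hzsum)]
    · -- y = 0 and dj = 0
      have hy0 : ∀ k, y k = 0 := by
        intro k
        by_contra h0
        exact hne ⟨k, Finset.mem_filter.2 ⟨mem_univ k, Nat.pos_of_ne_zero h0⟩⟩
      have hd0 : dj = 0 := by
        rw [← hsum]; exact Finset.sum_eq_zero fun k _ => hy0 k
      have hz0 := opt_zero hd0 hz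
      have : z = y := funext fun i => by rw [hz0 i, hy0 i]
      rw [this]
  · -- slack case: compare both to the "positive part" value
    have hzle : utility v p z ≤ ∑ i, (if 0 < (v i : ℝ) - p i then ((v i : ℝ) - p i) * (b i : ℝ) else 0) := by
      unfold utility
      refine Finset.sum_le_sum fun i _ => ?_
      by_cases h : 0 < (v i : ℝ) - p i
      · rw [if_pos h]
        have : (z i : ℝ) ≤ (b i : ℝ) := by exact_mod_cast hz.1 i
        nlinarith
      · rw [if_neg h]
        push_neg at h
        have : (0:ℝ) ≤ (z i : ℝ) := Nat.cast_nonneg _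
        nlinarith
    have hyeq : utility v p y = ∑ i, (if 0 < (v i : ℝ) - p i then ((v i : ℝ) - p i) * (b i : ℝ) else 0) := by
      unfold utility
      refine Finset.sum_congr rfl fun i _ => ?_
      by_cases h : 0 < (v i : ℝ) - p i
      · rw [if_pos h, hfull i h]
      · rw [if_neg h]
        push_neg at h
        rcases Nat.eq_zero_or_pos (y i) with h0 | h0
        · rw [h0]; simp
        · have := c1 i h0
          have : (v i : ℝ) - p i = 0 := le_antisymm h this
          rw [this]; ring
    rw [hyeq]; exact hzle

end Buyer2

section Buyer3
open Finset
variable {Ω : Type*} [Fintype Ω] [DecidableEq Ω]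
variable {b : Ω → ℕ} {dj : ℕ} {v : Ω → ℕ}

/-- adjust a function within bounds to reach a prescribed total. -/
lemma exists_sum_between (lo : Ω → ℕ) (n : ℕ) :
    ∀ f : Ω → ℕ, (∀ i, lo i ≤ f i) → (∑ i, lo i ≤ n) → (n ≤ ∑ i, f i) →
    ∃ g : Ω → ℕ, (∀ i, lo i ≤ g i) ∧ (∀ i, g i ≤ f i) ∧ ∑ i, g i = n := by
  classical
  have main : ∀ m : ℕ, ∀ f : Ω → ℕ, (∑ i, f i) - n = m →
      (∀ i, lo i ≤ f i) → (∑ i, lo i ≤ n) → (n ≤ ∑ i, f i) →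
      ∃ g : Ω → ℕ, (∀ i, lo i ≤ g i) ∧ (∀ i, g i ≤ f i) ∧ ∑ i, g i = n := by
    intro m
    induction m with
    | zero =>
      intro f hm hle h1 h2
      exact ⟨f, hle, fun i => le_rfl, by omega⟩
    | succ m ih =>
      intro f hm hle h1 h2
      have hlt : n < ∑ i, f i := by omega
      have hex : ∃ i, lo i < f i := by
        by_contra hall
        push_neg at hall
        have := Finset.sum_le_sum (fun i (_ : i ∈ univ) => hall i)
        omega
      obtain ⟨i0, hi0⟩ := hex
      set f' := Function.update f i0 (f i0 - 1) with hf'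
      have hs' : ∑ i, f' i + 1 = ∑ i, f i := by
        rw [hf', sum_update_nat]
        have := Finset.sum_erase_add univ f (Finset.mem_univ i0)
        omega
      have hle' : ∀ i, lo i ≤ f' i := by
        intro i
        by_cases hii : i = i0
        · subst hii; rw [hf', Function.update_self]; omega
        · rw [hf', Function.update_of_ne hii]; exact hle i
      obtain ⟨g, hg1, hg2, hg3⟩ := ih f' (by omega) hle' h1 (by omega)
      refine ⟨g, hg1, fun i => ?_, hg3⟩
      by_cases hii : i = i0
      · subst hii
        have := hg2 i
        rw [hf', Function.update_self] at this
        omega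
      · have := hg2 i
        rwa [hf', Function.update_of_ne hii] at this
  intro f hle h1 h2
  exact main ((∑ i, f i) - n) f rfl hle h1 h2

lemma swap_identity (v : Ω → ℕ) (p q : Ω → ℝ) (y z y' : Ω → ℕ)
    (hy' : ∀ i, y' i ≤ y i + z i) :
    utility v p y' + utility v q (fun i => y i + z i - y' i)
      = utility v (p ⊓ q) y + utility v (p ⊔ q) z
        + ∑ i, (q i - p i) * ((y' i : ℝ) - (if p i ≤ q i then (y i : ℝ) else (z i : ℝ))) := by
  unfold utility
  rw [← Finset.sum_add_distrib, ← Finset.sum_add_distrib, ← Finset.sum_add_distrib]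
  refine Finset.sum_congr rfl fun i _ => ?_
  have hc : ((y i + z i - y' i : ℕ) : ℝ) = (y i : ℝ) + (z i : ℝ) - (y' i : ℝ) := by
    rw [Nat.cast_sub (hy' i), Nat.cast_add]
  rw [hc, Pi.inf_apply, Pi.sup_apply]
  by_cases h : p i ≤ q i
  · rw [if_pos h, inf_eq_left.mpr h, sup_eq_right.mpr h]; ring
  · rw [if_neg h, inf_eq_right.mpr (le_of_not_ge h), sup_eq_left.mpr (le_of_not_ge h)]; ring

lemma ubest_submod (b : Ω → ℕ) (dj : ℕ) (v : Ω → ℕ) (p q : Ω → ℝ) :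
    ubest b dj v (p ⊓ q) + ubest b dj v (p ⊔ q) ≤ ubest b dj v p + ubest b dj v q := by
  classical
  obtain ⟨y, hy, hyv⟩ := exists_ubest (b := b) (dj := dj) (v := v) (p ⊓ q)
  obtain ⟨z, hz, hzv⟩ := exists_ubest (b := b) (dj := dj) (v := v) (p ⊔ q)
  suffices h : ∃ y' : Ω → ℕ, IsBundle b dj y' ∧ IsBundle b dj (fun i => y i + z i - y' i) ∧
      (∀ i, y' i ≤ y i + z i) ∧
      0 ≤ ∑ i, (q i - p i) * ((y' i : ℝ) - (if p i ≤ q i then (y i : ℝ) else (z i : ℝ))) by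
    obtain ⟨y', h1, h2, h3, h4⟩ := h
    rw [← hyv, ← hzv]
    have hid := swap_identity v p q y z y' h3
    have hub1 : utility v p y' ≤ ubest b dj v p := utility_le_ubest h1
    have hub2 : utility v q (fun i => y i + z i - y' i) ≤ ubest b dj v q :=
      utility_le_ubest h2
    linarith
  have hyb := hy.1; have hyd := hy.2; have hzb := hz.1; have hzd := hz.2
  set cand : Ω → ℕ := fun i => if p i ≤ q i then y i else z i with hcand
  by_cases hhi : dj < ∑ i, cand i
  · -- too large: decrease on the complement of A
    set lo : Ω → ℕ := fun i => if p i ≤ q i then y i else y i + z i - b i with hlo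
    have hlof : ∀ i, lo i ≤ cand i := by
      intro i; rw [hlo, hcand]
      by_cases h : p i ≤ q i
      · simp [h]
      · simp only [if_neg h]
        have := hyb i; omega
    have hlosum : ∑ i, lo i ≤ dj := by
      have hly : ∀ i, lo i ≤ y i := by
        intro i
        rw [hlo]; by_cases h : p i ≤ q i
        · simp [h]
        · simp only [if_neg h]; have := hzb i; omega
      exact le_trans (Finset.sum_le_sum fun i _ => hly i) hyd
    obtain ⟨g, hg1, hg2, hg3⟩ := exists_sum_between lo dj cand hlof hlosum (le_of_lt hhi)
    refine ⟨g, ⟨fun i => ?_, by omega⟩, ⟨fun i => ?_, ?_⟩, fun i => ?_, ?_⟩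
    · -- g ≤ b
      have h1 := hg1 i; have h2 := hg2 i
      rw [hlo] at h1; rw [hcand] at h2
      by_cases h : p i ≤ q i
      · simp only [if_pos h] at h2; exact le_trans h2 (hyb i)
      · simp only [if_neg h] at h2; exact le_trans h2 (hzb i)
    · -- z' ≤ b
      show y i + z i - g i ≤ b i
      have h1 := hg1 i
      rw [hlo] at h1
      by_cases h : p i ≤ q i
      · simp only [if_pos h] at h1
        have := hzb i; omega
      · simp only [if_neg h] at h1
        have := hyb i; have := hzb i; omega
    · -- ∑ z' ≤ dj
      show ∑ i, (y i + z i - g i) ≤ dj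
      have hz'sum : ∑ i, (y i + z i - g i) + ∑ i, g i = ∑ i, (y i + z i) := by
        rw [← Finset.sum_add_distrib]
        refine Finset.sum_congr rfl fun i _ => ?_
        have h2 := hg2 i; have := hlof i
        rw [hcand] at h2
        by_cases h : p i ≤ q i
        · simp only [if_pos h] at h2; omega
        · simp only [if_neg h] at h2; omega
      rw [Finset.sum_add_distrib] at hz'sum
      omega
    · -- y' ≤ y + z
      have h2 := hg2 i; rw [hcand] at h2
      by_cases h : p i ≤ q i
      · simp only [if_pos h] at h2; omega
      · simp only [if_neg h] at h2; omega
    · -- sign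
      refine Finset.sum_nonneg fun i _ => ?_
      have h1 := hg1 i; have h2 := hg2 i
      rw [hlo] at h1; rw [hcand] at h2
      by_cases h : p i ≤ q i
      · simp only [if_pos h] at h1 h2 ⊢
        have hgy : g i = y i := le_antisymm h2 h1
        rw [hgy]; simp
      · simp only [if_neg h] at h1 h2 ⊢
        have hq : q i - p i ≤ 0 := by linarith [lt_of_not_ge h]
        have hgz : (g i : ℝ) ≤ (z i : ℝ) := by exact_mod_cast h2
        nlinarith
  · by_cases hlo2 : ∑ i, (y i + z i) ≤ dj + ∑ i, cand i
    · -- middle case: take y' = cand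
      refine ⟨cand, ⟨fun i => ?_, by omega⟩, ⟨fun i => ?_, ?_⟩, fun i => ?_, ?_⟩
      · rw [hcand]; by_cases h : p i ≤ q i
        · simp only [if_pos h]; exact hyb i
        · simp only [if_neg h]; exact hzb i
      · show y i + z i - cand i ≤ b i
        rw [hcand]; by_cases h : p i ≤ q i
        · simp only [if_pos h]; have := hzb i; omega
        · simp only [if_neg h]; have := hyb i; omega
      · show ∑ i, (y i + z i - cand i) ≤ dj
        have hz'sum : ∑ i, (y i + z i - cand i) + ∑ i, cand i = ∑ i, (y i + z i) := by
          rw [← Finset.sum_add_distrib]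
          refine Finset.sum_congr rfl fun i _ => ?_
          rw [hcand]; by_cases h : p i ≤ q i
          · simp only [if_pos h]; omega
          · simp only [if_neg h]; omega
        omega
      · rw [hcand]; by_cases h : p i ≤ q i
        · simp only [if_pos h]; omega
        · simp only [if_neg h]; omega
      · refine Finset.sum_nonneg fun i _ => ?_
        rw [hcand]
        by_cases h : p i ≤ q i
        · simp [if_pos h]
        · simp [if_neg h]
    · -- too small: increase on A
      push_neg at hlo2
      set hi : Ω → ℕ := fun i => if p i ≤ q i then min (b i) (y i + z i) else z i with hhi2
      have hlof : ∀ i, cand i ≤ hi i := by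
        intro i; rw [hhi2, hcand]
        by_cases h : p i ≤ q i
        · simp only [if_pos h]
          have := hyb i; omega
        · simp only [if_neg h]; exact le_rfl
      have hn1 : ∑ i, cand i ≤ ∑ i, (y i + z i) - dj := by omega
      have hn2 : ∑ i, (y i + z i) - dj ≤ ∑ i, hi i := by
        have : ∑ i, z i ≤ ∑ i, hi i := by
          refine Finset.sum_le_sum fun i _ => ?_
          rw [hhi2]; by_cases h : p i ≤ q i
          · simp only [if_pos h]; have := hzb i; omega
          · simp only [if_neg h]; exact le_rfl
        rw [Finset.sum_add_distrib]
        omega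
      obtain ⟨g, hg1, hg2, hg3⟩ :=
        exists_sum_between cand (∑ i, (y i + z i) - dj) hi hlof hn1 hn2
      have hgyz : ∀ i, g i ≤ y i + z i := by
        intro i
        have h2 := hg2 i; rw [hhi2] at h2
        by_cases h : p i ≤ q i
        · simp only [if_pos h] at h2; omega
        · simp only [if_neg h] at h2; omega
      have hsyz : ∑ i, (y i + z i) ≤ dj + dj := by
        rw [Finset.sum_add_distrib]; omega
      refine ⟨g, ⟨fun i => ?_, by omega⟩, ⟨fun i => ?_, ?_⟩, hgyz, ?_⟩
      · have h2 := hg2 i; rw [hhi2] at h2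
        by_cases h : p i ≤ q i
        · simp only [if_pos h] at h2; omega
        · simp only [if_neg h] at h2; exact le_trans h2 (hzb i)
      · show y i + z i - g i ≤ b i
        have h1 := hg1 i; rw [hcand] at h1
        by_cases h : p i ≤ q i
        · simp only [if_pos h] at h1
          have := hzb i; omega
        · simp only [if_neg h] at h1
          have := hyb i; omega
      · show ∑ i, (y i + z i - g i) ≤ dj
        have hz'sum : ∑ i, (y i + z i - g i) + ∑ i, g i = ∑ i, (y i + z i) := by
          rw [← Finset.sum_add_distrib]
          exact Finset.sum_congr rfl fun i _ => by have := hgyz i; omega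
        omega
      · refine Finset.sum_nonneg fun i _ => ?_
        have h1 := hg1 i; have h2 := hg2 i
        rw [hcand] at h1; rw [hhi2] at h2
        by_cases h : p i ≤ q i
        · simp only [if_pos h] at h1 ⊢
          have hq : 0 ≤ q i - p i := by linarith
          have hgy : (y i : ℝ) ≤ (g i : ℝ) := by exact_mod_cast h1
          nlinarith
        · simp only [if_neg h] at h1 h2 ⊢
          have hgz : g i = z i := le_antisymm h2 h1
          rw [hgz]; simp
  
end Buyer3

section Market
open Finset
set_option linter.unusedSectionVars false

variable {Ω N : Type*} [Fintype Ω] [Fintype N] [DecidableEq Ω]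

noncomputable def Lfun (b : Ω → ℕ) (d : N → ℕ) (v : Ω → N → ℕ) (p : Ω → ℝ) : ℝ :=
  (∑ j, ubest b (d j) (fun i => v i j) p) + ∑ i, (b i : ℝ) * p i

lemma continuous_utility (v : Ω → ℕ) (y : Ω → ℕ) :
    Continuous fun p : Ω → ℝ => utility v p y := by
  unfold utility
  exact continuous_finset_sum _ fun i _ =>
    ((continuous_const.sub (continuous_apply i)).mul continuous_const)

lemma continuous_sup' {ι : Type*} (s : Finset ι) (hs : s.Nonempty)
    (f : ι → (Ω → ℝ) → ℝ) (hf : ∀ i, Continuous (f i)) :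
    Continuous fun p => s.sup' hs (fun i => f i p) := by
  induction hs using Finset.Nonempty.cons_induction with
  | singleton i => simpa using hf i
  | cons i s hi hne ih =>
    have he : (fun p => (Finset.cons i s hi).sup' (Finset.cons_nonempty hi)
        (fun k => f k p)) = fun p => max (f i p) (s.sup' hne fun k => f k p) := by
      funext p
      rw [Finset.sup'_cons hne]
    rw [he]
    exact (hf i).max ih

lemma continuous_ubest (b : Ω → ℕ) (dj : ℕ) (v : Ω → ℕ) :
    Continuous (ubest b dj v) := by
  unfold ubest
  exact continuous_sup' _ _ _ fun y => continuous_utility v y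

lemma continuous_Lfun (b : Ω → ℕ) (d : N → ℕ) (v : Ω → N → ℕ) :
    Continuous (Lfun b d v) := by
  unfold Lfun
  exact (continuous_finset_sum _ fun j _ => continuous_ubest _ _ _).add
    (continuous_finset_sum _ fun i _ => continuous_const.mul (continuous_apply i))

lemma ubest_anti {b : Ω → ℕ} {dj : ℕ} {v : Ω → ℕ} {p q : Ω → ℝ} (h : p ≤ q) :
    ubest b dj v q ≤ ubest b dj v p := by
  obtain ⟨y, hy, hyv⟩ := exists_ubest (b := b) (dj := dj) (v := v) q
  rw [← hyv]
  refine le_trans (Finset.sum_le_sum fun i _ => ?_) (utility_le_ubest hy)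
  have := h i
  have : (0:ℝ) ≤ (y i : ℝ) := Nat.cast_nonneg _
  nlinarith [h i]

lemma ubest_cap {b : Ω → ℕ} {dj : ℕ} {v : Ω → ℕ} {M : Ω → ℝ}
    (hv : ∀ i, (v i : ℝ) ≤ M i) (p : Ω → ℝ) :
    ubest b dj v (p ⊓ M) ≤ ubest b dj v p := by
  classical
  obtain ⟨y, hy, hyv⟩ := exists_ubest (b := b) (dj := dj) (v := v) (p ⊓ M)
  rw [← hyv]
  set y' : Ω → ℕ := fun i => if p i ≤ M i then y i else 0 with hy'
  have hy'b : IsBundle b dj y' := by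
    refine ⟨fun i => ?_, le_trans (Finset.sum_le_sum fun i _ => ?_) hy.2⟩
    · rw [hy']; by_cases h : p i ≤ M i
      · simp only [if_pos h]; exact hy.1 i
      · simp only [if_neg h]; exact Nat.zero_le _
    · rw [hy']; by_cases h : p i ≤ M i
      · simp only [if_pos h]; exact le_rfl
      · simp only [if_neg h]; exact Nat.zero_le _
  have h1 : utility v (p ⊓ M) y ≤ utility v (p ⊓ M) y' := by
    unfold utility
    refine Finset.sum_le_sum fun i _ => ?_
    rw [hy', Pi.inf_apply]
    by_cases h : p i ≤ M i
    · simp only [if_pos h]; exact le_rfl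
    · simp only [if_neg h]
      rw [inf_eq_right.mpr (le_of_not_ge h)]
      have h2 : (v i : ℝ) - M i ≤ 0 := by linarith [hv i]
      have h3 : (0:ℝ) ≤ (y i : ℝ) := Nat.cast_nonneg _
      simp only [Nat.cast_zero, mul_zero]
      nlinarith
  have h2 : utility v (p ⊓ M) y' = utility v p y' := by
    unfold utility
    refine Finset.sum_congr rfl fun i _ => ?_
    rw [hy', Pi.inf_apply]
    by_cases h : p i ≤ M i
    · simp only [if_pos h, inf_eq_left.mpr h]
    · simp only [if_neg h, Nat.cast_zero, mul_zero]
  calc utility v (p ⊓ M) y ≤ utility v (p ⊓ M) y' := h1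
    _ = utility v p y' := h2
    _ ≤ ubest b dj v p := utility_le_ubest hy'b

/-- the valuation bound vector -/
noncomputable def Mv (v : Ω → N → ℕ) : Ω → ℝ := fun i => ((univ.sup fun j => v i j : ℕ) : ℝ)

lemma Mv_nonneg (v : Ω → N → ℕ) : (0 : Ω → ℝ) ≤ Mv v := fun i => Nat.cast_nonneg _

lemma Lfun_cap (b : Ω → ℕ) (d : N → ℕ) (v : Ω → N → ℕ) {p : Ω → ℝ} (hp : (0:Ω → ℝ) ≤ p) :
    Lfun b d v (p ⊓ Mv v) ≤ Lfun b d v p := by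
  unfold Lfun
  have h1 : ∀ j, ubest b (d j) (fun i => v i j) (p ⊓ Mv v) ≤ ubest b (d j) (fun i => v i j) p :=
    fun j => ubest_cap (fun i => by
      exact_mod_cast Nat.cast_le.mpr (Finset.le_sup (mem_univ j))) p
  refine add_le_add (Finset.sum_le_sum fun j _ => h1 j) (Finset.sum_le_sum fun i _ => ?_)
  have h2 : (p ⊓ Mv v) i ≤ p i := inf_le_left
  have h3 : (0:ℝ) ≤ (b i : ℝ) := Nat.cast_nonneg _
  nlinarith

lemma Lfun_submod (b : Ω → ℕ) (d : N → ℕ) (v : Ω → N → ℕ) (p q : Ω → ℝ) :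
    Lfun b d v (p ⊓ q) + Lfun b d v (p ⊔ q) ≤ Lfun b d v p + Lfun b d v q := by
  unfold Lfun
  have h1 : (∑ j, ubest b (d j) (fun i => v i j) (p ⊓ q))
      + ∑ j, ubest b (d j) (fun i => v i j) (p ⊔ q)
      ≤ (∑ j, ubest b (d j) (fun i => v i j) p) + ∑ j, ubest b (d j) (fun i => v i j) q := by
    rw [← Finset.sum_add_distrib, ← Finset.sum_add_distrib]
    exact Finset.sum_le_sum fun j _ => ubest_submod b (d j) (fun i => v i j) p q
  have h2 : (∑ i, (b i : ℝ) * (p ⊓ q) i) + ∑ i, (b i : ℝ) * (p ⊔ q) i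
      = (∑ i, (b i : ℝ) * p i) + ∑ i, (b i : ℝ) * q i := by
    rw [← Finset.sum_add_distrib, ← Finset.sum_add_distrib]
    refine Finset.sum_congr rfl fun i _ => ?_
    rw [Pi.inf_apply, Pi.sup_apply, ← mul_add, ← mul_add, min_add_max]
  linarith

/-- monotonicity of L above a competitive price. -/
lemma Lfun_mono_of_stable {b : Ω → ℕ} {d : N → ℕ} {v : Ω → N → ℕ} {q q' : Ω → ℝ}
    (x : Ω → N → ℕ) (hfeas : ∀ i, ∑ j, x i j ≤ b i)
    (hdem : ∀ j, InDemand b (d j) (fun i => v i j) q (fun i => x i j))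
    (h : q ≤ q') : Lfun b d v q ≤ Lfun b d v q' := by
  classical
  have key : ∀ j, ubest b (d j) (fun i => v i j) q
      ≤ ubest b (d j) (fun i => v i j) q' + ∑ i, (q' i - q i) * (x i j : ℝ) := by
    intro j
    have hopt := (inDemand_iff.1 (hdem j))
    have h1 : utility (fun i => v i j) q' (fun i => x i j)
        = utility (fun i => v i j) q (fun i => x i j) - ∑ i, (q' i - q i) * (x i j : ℝ) := by
      unfold utility
      rw [← Finset.sum_sub_distrib]
      exact Finset.sum_congr rfl fun i _ => by ring
    have h2 : utility (fun i => v i j) q' (fun i => x i j)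
        ≤ ubest b (d j) (fun i => v i j) q' := utility_le_ubest hopt.1
    rw [h1, hopt.2] at h2
    linarith
  have hsum : ∑ j, ubest b (d j) (fun i => v i j) q
      ≤ (∑ j, ubest b (d j) (fun i => v i j) q') + ∑ j, ∑ i, (q' i - q i) * (x i j : ℝ) := by
    rw [← Finset.sum_add_distrib]
    exact Finset.sum_le_sum fun j _ => key j
  have hswap : ∑ j, ∑ i, (q' i - q i) * (x i j : ℝ)
      = ∑ i, (q' i - q i) * ((∑ j, x i j : ℕ) : ℝ) := by
    rw [Finset.sum_comm]
    refine Finset.sum_congr rfl fun i _ => ?_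
    rw [Nat.cast_sum, Finset.mul_sum]
  have hbound : ∑ i, (q' i - q i) * ((∑ j, x i j : ℕ) : ℝ) ≤ ∑ i, (q' i - q i) * (b i : ℝ) := by
    refine Finset.sum_le_sum fun i _ => ?_
    have h1 : (0:ℝ) ≤ q' i - q i := by linarith [h i]
    have h2 : ((∑ j, x i j : ℕ) : ℝ) ≤ (b i : ℝ) := by exact_mod_cast hfeas i
    nlinarith
  unfold Lfun
  have : ∑ i, (q' i - q i) * (b i : ℝ) = (∑ i, (b i : ℝ) * q' i) - ∑ i, (b i : ℝ) * q i := by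
    rw [← Finset.sum_sub_distrib]
    exact Finset.sum_congr rfl fun i _ => by ring
  rw [hswap] at hsum
  linarith

/-- existence of a global minimizer of L over nonnegative prices, which is moreover
    pointwise minimal among the minimizers. -/
lemma exists_min_minimizer (b : Ω → ℕ) (d : N → ℕ) (v : Ω → N → ℕ) :
    ∃ pstar : Ω → ℝ, (0:Ω → ℝ) ≤ pstar ∧
      (∀ q : Ω → ℝ, (0:Ω → ℝ) ≤ q → Lfun b d v pstar ≤ Lfun b d v q) ∧
      (∀ q : Ω → ℝ, (0:Ω → ℝ) ≤ q → Lfun b d v q = Lfun b d v pstar → pstar ≤ q) := by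
  classical
  set K : Set (Ω → ℝ) := Set.Icc 0 (Mv v) with hK
  have hKc : IsCompact K := isCompact_Icc
  have hKne : K.Nonempty := ⟨0, le_rfl, Mv_nonneg v⟩
  obtain ⟨p0, hp0K, hp0min⟩ := hKc.exists_isMinOn hKne (continuous_Lfun b d v).continuousOn
  -- p0 is a global minimizer over nonnegative prices
  have hglobal : ∀ q : Ω → ℝ, (0:Ω→ℝ) ≤ q → Lfun b d v p0 ≤ Lfun b d v q := by
    intro q hq
    have h1 : q ⊓ Mv v ∈ K := ⟨le_inf hq (Mv_nonneg v), inf_le_right⟩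
    exact le_trans (hp0min h1) (Lfun_cap b d v hq)
  -- choose the minimizer with smallest coordinate sum
  set A : Set (Ω → ℝ) := K ∩ {p | Lfun b d v p = Lfun b d v p0} with hA
  have hAc : IsCompact A := hKc.inter_right ((isClosed_singleton).preimage (continuous_Lfun b d v))
  have hAne : A.Nonempty := ⟨p0, hp0K, rfl⟩
  obtain ⟨ps, hpsA, hpsmin⟩ := hAc.exists_isMinOn hAne
    (continuous_finset_sum univ fun (i : Ω) _ => continuous_apply i).continuousOn
  have hps0 : (0:Ω→ℝ) ≤ ps := hpsA.1.1
  have hpsL : Lfun b d v ps = Lfun b d v p0 := hpsA.2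
  have hpsM : ps ≤ Mv v := hpsA.1.2
  refine ⟨ps, hps0, fun q hq => hpsL ▸ hglobal q hq, ?_⟩
  intro q hq hqL
  have hm0 : (0:Ω→ℝ) ≤ ps ⊓ q := le_inf hps0 hq
  have hs0 : (0:Ω→ℝ) ≤ ps ⊔ q := le_trans hps0 le_sup_left
  have hsub := Lfun_submod b d v ps q
  have h1 : Lfun b d v p0 ≤ Lfun b d v (ps ⊓ q) := hglobal _ hm0
  have h2 : Lfun b d v p0 ≤ Lfun b d v (ps ⊔ q) := hglobal _ hs0
  have hmL : Lfun b d v (ps ⊓ q) = Lfun b d v p0 := by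
    rw [hqL, hpsL] at hsub; linarith
  have hmA : ps ⊓ q ∈ A := ⟨⟨hm0, le_trans inf_le_left hpsM⟩, hmL⟩
  have hsum := hpsmin hmA
  -- ps ⊓ q ≤ ps pointwise and has no smaller sum, so equal
  intro i
  by_contra hcon
  push_neg at hcon
  have hlt : (ps ⊓ q) i < ps i := by
    rw [Pi.inf_apply]
    exact min_lt_iff.2 (Or.inr hcon)
  have hle : ∀ k ∈ univ, (ps ⊓ q) k ≤ ps k := fun k _ => inf_le_left
  have hslt : ∑ k, (ps ⊓ q) k < ∑ k, ps k :=
    Finset.sum_lt_sum hle ⟨i, mem_univ i, hlt⟩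
  exact absurd hsum (not_le.2 hslt)

end Market

section Market2
open Finset
set_option linter.unusedSectionVars false

variable {Ω N : Type*} [Fintype Ω] [Fintype N] [DecidableEq Ω]

lemma demand_selection {b : Ω → ℕ} {d : N → ℕ} {v : Ω → N → ℕ} {p : Ω → ℝ}
    (hp : (0:Ω → ℝ) ≤ p)
    (hglob : ∀ q : Ω → ℝ, (0:Ω → ℝ) ≤ q → Lfun b d v p ≤ Lfun b d v q)
    (S : Finset Ω) :
    ∃ w : N → Ω → ℕ, (∀ j, InDemand b (d j) (fun i => v i j) p (w j)) ∧
      ∑ j, ∑ i ∈ S, w j i ≤ ∑ i ∈ S, b i := by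
  classical
  set B : ℕ := ∑ i, b i with hB
  set gap : N → Finset ℝ := fun j =>
    ((Bset b (d j)).image fun y =>
      ubest b (d j) (fun i => v i j) p - utility (fun i => v i j) p y).filter
      fun g => 0 < g with hgap
  set emf : N → ℝ := fun j => if h : (gap j).Nonempty then (gap j).min' h else 1 with hemf
  set em : ℝ := (insert (1:ℝ) (univ.image emf)).min' (insert_nonempty _ _) with hem
  have hgap_pos : ∀ j x, x ∈ gap j → 0 < x := by
    intro j x hx
    rw [hgap] at hx
    exact (Finset.mem_filter.1 hx).2
  have hall_pos : ∀ x ∈ insert (1:ℝ) (univ.image emf), 0 < x := by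
    intro x hx
    rcases Finset.mem_insert.1 hx with h | h
    · rw [h]; exact one_pos
    · obtain ⟨j, _, hj⟩ := Finset.mem_image.1 h
      rw [← hj, hemf]
      by_cases hne : (gap j).Nonempty
      · simp only [dif_pos hne]
        exact hgap_pos j _ (Finset.min'_mem (gap j) hne)
      · simp only [dif_neg hne]; exact one_pos
  have hem_pos : 0 < em := hall_pos _ (Finset.min'_mem _ _)
  have hem_le : ∀ j (y : Ω → ℕ), IsBundle b (d j) y →
      utility (fun i => v i j) p y < ubest b (d j) (fun i => v i j) p →
      em ≤ ubest b (d j) (fun i => v i j) p - utility (fun i => v i j) p y := by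
    intro j y hy hlt
    have hg : ubest b (d j) (fun i => v i j) p - utility (fun i => v i j) p y ∈ gap j := by
      rw [hgap]
      exact Finset.mem_filter.2
        ⟨Finset.mem_image_of_mem _ ((mem_Bset b (d j)).2 hy), by linarith⟩
    have hne : (gap j).Nonempty := ⟨_, hg⟩
    have h1 : emf j ≤ ubest b (d j) (fun i => v i j) p - utility (fun i => v i j) p y := by
      rw [hemf]; simp only [dif_pos hne]; exact Finset.min'_le _ _ hg
    have h2 : em ≤ emf j :=
      Finset.min'_le _ _ (Finset.mem_insert_of_mem (Finset.mem_image_of_mem _ (mem_univ j)))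
    linarith
  set ε : ℝ := em / ((B : ℝ) + 1) with hε
  have hBpos : (0:ℝ) < (B:ℝ) + 1 := by positivity
  have hε_pos : 0 < ε := div_pos hem_pos hBpos
  have hεB : ε * (B:ℝ) < em := by
    have h1 : ε * ((B:ℝ) + 1) = em := div_mul_cancel₀ em (ne_of_gt hBpos)
    nlinarith
  set pε : Ω → ℝ := fun i => p i + (if i ∈ S then ε else 0) with hpε
  have hpε0 : (0:Ω → ℝ) ≤ pε := by
    intro i
    rw [hpε]
    have := hp i
    by_cases h : i ∈ S
    · simp only [if_pos h]; linarith
    · simp only [if_neg h]; linarith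
  have hpεU : ∀ (vj : Ω → ℕ) (y : Ω → ℕ),
      utility vj pε y = utility vj p y - ε * ∑ i ∈ S, (y i : ℝ) := by
    intro vj y
    unfold utility
    have key : ∀ i, ((vj i : ℝ) - pε i) * (y i : ℝ)
        = ((vj i : ℝ) - p i) * (y i : ℝ) - (if i ∈ S then ε * (y i : ℝ) else 0) := by
      intro i
      rw [hpε]
      by_cases h : i ∈ S
      · simp only [if_pos h]; ring
      · simp only [if_neg h]; ring
    rw [Finset.sum_congr rfl fun i _ => key i, Finset.sum_sub_distrib,
      Finset.sum_ite_mem, Finset.univ_inter, Finset.mul_sum]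
  have hw : ∀ j, ∃ y, IsBundle b (d j) y ∧
      utility (fun i => v i j) pε y = ubest b (d j) (fun i => v i j) pε :=
    fun j => exists_ubest pε
  choose w hw1 hw2 using hw
  have hwopt : ∀ j, InDemand b (d j) (fun i => v i j) p (w j) := by
    intro j
    rw [inDemand_iff]
    refine ⟨hw1 j, ?_⟩
    by_contra hne2
    have hlt : utility (fun i => v i j) p (w j) < ubest b (d j) (fun i => v i j) p :=
      lt_of_le_of_ne (utility_le_ubest (hw1 j)) hne2
    have hgp := hem_le j (w j) (hw1 j) hlt
    obtain ⟨yo, hyo, hyoe⟩ := exists_ubest (b := b) (dj := d j) (v := fun i => v i j) p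
    have h1 : utility (fun i => v i j) pε yo ≤ utility (fun i => v i j) pε (w j) := by
      rw [hw2 j]
      exact utility_le_ubest hyo
    rw [hpεU, hpεU] at h1
    have hyoS : ∑ i ∈ S, (yo i : ℝ) ≤ (B:ℝ) := by
      have h2 : ∑ i ∈ S, (yo i : ℝ) ≤ ∑ i ∈ S, (b i : ℝ) :=
        Finset.sum_le_sum fun i _ => by exact_mod_cast hyo.1 i
      have h3 : ∑ i ∈ S, (b i : ℝ) ≤ (B:ℝ) := by
        rw [hB]
        push_cast
        exact Finset.sum_le_sum_of_subset_of_nonneg (Finset.subset_univ S)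
          fun i _ _ => Nat.cast_nonneg _
      linarith
    have hwS : 0 ≤ ∑ i ∈ S, (w j i : ℝ) := Finset.sum_nonneg fun i _ => Nat.cast_nonneg _
    have hmul : ε * ∑ i ∈ S, (yo i : ℝ) ≤ ε * (B:ℝ) :=
      mul_le_mul_of_nonneg_left hyoS (le_of_lt hε_pos)
    have hmul2 : 0 ≤ ε * ∑ i ∈ S, (w j i : ℝ) := mul_nonneg (le_of_lt hε_pos) hwS
    rw [hyoe] at h1
    linarith
  refine ⟨w, hwopt, ?_⟩
  have hub : ∀ j, ubest b (d j) (fun i => v i j) pε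
      = ubest b (d j) (fun i => v i j) p - ε * ∑ i ∈ S, (w j i : ℝ) := by
    intro j
    rw [← hw2 j, hpεU]
    congr 1
    exact (inDemand_iff.1 (hwopt j)).2
  have hlin : ∑ i, (b i : ℝ) * pε i = (∑ i, (b i : ℝ) * p i) + ε * ∑ i ∈ S, (b i : ℝ) := by
    have key : ∀ i, (b i : ℝ) * pε i
        = (b i : ℝ) * p i + (if i ∈ S then ε * (b i : ℝ) else 0) := by
      intro i
      rw [hpε]
      by_cases h : i ∈ S
      · simp only [if_pos h]; ring
      · simp only [if_neg h]; ring
    rw [Finset.sum_congr rfl fun i _ => key i, Finset.sum_add_distrib,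
      Finset.sum_ite_mem, Finset.univ_inter, Finset.mul_sum]
  have hLexp : Lfun b d v pε = Lfun b d v p
      - ε * (∑ j, ∑ i ∈ S, (w j i : ℝ)) + ε * ∑ i ∈ S, (b i : ℝ) := by
    unfold Lfun
    rw [hlin, Finset.sum_congr rfl fun j (_ : j ∈ univ) => hub j, Finset.sum_sub_distrib,
      ← Finset.mul_sum]
    ring
  have hLp := hglob pε hpε0
  have hineq : (∑ j, ∑ i ∈ S, (w j i : ℝ)) ≤ ∑ i ∈ S, (b i : ℝ) := by
    have h2 : ε * (∑ j, ∑ i ∈ S, (w j i : ℝ)) ≤ ε * ∑ i ∈ S, (b i : ℝ) := by linarith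
    exact (mul_le_mul_iff_right₀ hε_pos).1 h2
  exact_mod_cast hineq

end Market2

section Market3
open Finset
set_option linter.unusedSectionVars false

variable {Ω : Type*} [Fintype Ω] [DecidableEq Ω]

lemma buyer_structure (b : Ω → ℕ) (dj : ℕ) (vj : Ω → ℕ) (p : Ω → ℝ) :
    ∃ (H T : Finset Ω) (c : ℕ),
      Disjoint H T ∧
      c ≤ ∑ i ∈ T, b i ∧
      (∀ y, InDemand b dj vj p y → ∀ i ∈ H, y i = b i) ∧
      (∀ y, InDemand b dj vj p y → c ≤ ∑ i ∈ T, y i) ∧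
      (∀ g : Ω → ℕ, (∀ i, g i ≤ b i) → (∀ i, i ∉ T → g i = 0) → (∑ i, g i = c) →
        InDemand b dj vj p (fun i => (if i ∈ H then b i else 0) + g i)) ∧
      (∑ i ∈ H, b i) + c ≤ dj := by
  classical
  rcases Nat.eq_zero_or_pos dj with hd0 | hdpos
  · -- zero-demand buyer
    refine ⟨∅, ∅, 0, Finset.disjoint_empty_left _, by simp,
      fun y _ i hi => absurd hi (Finset.notMem_empty i),
      fun y _ => Nat.zero_le _, ?_, by simp [hd0]⟩
    intro g hgb hgs hgc
    have hg0 : ∀ i, g i = 0 := fun i => hgs i (Finset.notMem_empty i)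
    have hy0 : ∀ i, (if i ∈ (∅ : Finset Ω) then b i else 0) + g i = 0 := by
      intro i; simp [hg0 i]
    have hyfun : (fun i => (if i ∈ (∅ : Finset Ω) then b i else 0) + g i)
        = fun _ => 0 := funext fun i => hy0 i
    rw [hyfun]
    constructor
    · exact ⟨fun i => Nat.zero_le _, by simp⟩
    · intro z hz
      have hz0 := opt_zero hd0 hz
      have h1 : utility vj p z = 0 :=
        Finset.sum_eq_zero fun i _ => by rw [hz0 i]; simp
      have h2 : utility vj p (fun _ => 0) = 0 :=
        Finset.sum_eq_zero fun i _ => by simp [utility]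
      rw [h1, h2]
  · by_cases hflex : bsum b (Sgt vj p 0) < dj
    · -- flexible buyer
      refine ⟨Sgt vj p 0, ∅, 0, Finset.disjoint_empty_right _, by simp,
        fun y hy i hi => opt_full_flex hy hflex (mem_Sgt.1 hi),
        fun y _ => Nat.zero_le _, ?_, ?_⟩
      · intro g hgb hgs hgc
        have hg0 : ∀ i, g i = 0 := fun i => hgs i (Finset.notMem_empty i)
        set y : Ω → ℕ := fun i => (if i ∈ Sgt vj p 0 then b i else 0) + g i with hydef
        have hyv : ∀ i, y i = if i ∈ Sgt vj p 0 then b i else 0 := by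
          intro i; rw [hydef]; simp [hg0 i]
        have hysum : ∑ i, y i = bsum b (Sgt vj p 0) := by
          rw [Finset.sum_congr rfl fun i _ => hyv i, Finset.sum_ite_mem,
            Finset.univ_inter]
          rfl
        refine opt_of_conditions ⟨fun i => ?_, ?_⟩ ?_ (Or.inr ?_) ?_
        · rw [hyv i]; by_cases h : i ∈ Sgt vj p 0
          · simp only [if_pos h]; exact le_rfl
          · simp only [if_neg h]; exact Nat.zero_le _
        · rw [hysum]; omega
        · intro i hi
          rw [hyv i] at hi
          by_cases h : i ∈ Sgt vj p 0
          · exact le_of_lt (mem_Sgt.1 h)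
          · rw [if_neg h] at hi; omega
        · intro i hi
          rw [hyv i, if_pos (mem_Sgt.2 hi)]
        · intro i k hk hik
          rw [hyv k] at hk
          have hkS : k ∈ Sgt vj p 0 := by
            by_cases h : k ∈ Sgt vj p 0
            · exact h
            · rw [if_neg h] at hk; omega
          have hiS : i ∈ Sgt vj p 0 :=
            mem_Sgt.2 (lt_trans (mem_Sgt.1 hkS) hik)
          rw [hyv i, if_pos hiS]
      · have h2 : (∑ i ∈ Sgt vj p 0, b i) = bsum b (Sgt vj p 0) := rfl
        omega
    · -- exact buyer
      push_neg at hflex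
      obtain ⟨t, htpos, htge, htlt, _⟩ := exists_thresh hflex hdpos
      set Hs := Sgt vj p t with hHs
      set Ts := Sge vj p t \ Sgt vj p t with hTs
      have hsd : ∑ i ∈ Ts, b i + ∑ i ∈ Hs, b i = ∑ i ∈ Sge vj p t, b i :=
        Finset.sum_sdiff Sgt_subset_Sge
      have hc1 : dj - bsum b Hs ≤ ∑ i ∈ Ts, b i := by
        have h1 : dj ≤ ∑ i ∈ Sge vj p t, b i := htge
        have h2 : bsum b Hs = ∑ i ∈ Hs, b i := rfl
        omega
      refine ⟨Hs, Ts, dj - bsum b Hs, Finset.disjoint_sdiff, hc1,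
        fun y hy i hi => opt_full_above hy htpos htge htlt (mem_Sgt.1 hi),
        ?_, ?_, ?_⟩
      · intro y hy
        have h0 := opt_T_count hy htpos htge htlt
        rw [← hTs, ← hHs] at h0
        have h2 : bsum b Hs = ∑ i ∈ Hs, b i := rfl
        omega
      · intro g hgb hgs hgc
        have hgH : ∀ i, i ∈ Hs → g i = 0 := by
          intro i hi
          refine hgs i fun hmem => ?_
          exact absurd hi (Finset.mem_sdiff.1 hmem).2
        set y : Ω → ℕ := fun i => (if i ∈ Hs then b i else 0) + g i with hydef
        have hyH : ∀ i, i ∈ Hs → y i = b i := by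
          intro i hi; simp only [hydef]; simp [if_pos hi, hgH i hi]
        have hysum : ∑ i, y i = dj := by
          simp only [hydef]
          rw [Finset.sum_add_distrib, Finset.sum_ite_mem, Finset.univ_inter, hgc]
          have : (∑ i ∈ Hs, b i) = bsum b Hs := rfl
          omega
        refine opt_of_conditions ⟨fun i => ?_, by rw [hysum]⟩ ?_ (Or.inl hysum) ?_
        · simp only [hydef]
          by_cases h : i ∈ Hs
          · simp [if_pos h, hgH i h]
          · simp only [if_neg h, zero_add]; exact hgb i
        · intro i hi
          simp only [hydef] at hi
          by_cases h : i ∈ Hs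
          · exact le_of_lt (lt_trans htpos (mem_Sgt.1 h))
          · rw [if_neg h, zero_add] at hi
            have hiT : i ∈ Ts := by
              by_contra hnot
              rw [hgs i hnot] at hi; omega
            have := (Finset.mem_sdiff.1 hiT).1
            exact le_trans (le_of_lt htpos) (mem_Sge.1 this)
        · intro i k hk hik
          simp only [hydef] at hk
          have hkt : t ≤ (vj k : ℝ) - p k := by
            by_cases h : k ∈ Hs
            · exact le_of_lt (mem_Sgt.1 h)
            · rw [if_neg h, zero_add] at hk
              have hkT : k ∈ Ts := by
                by_contra hnot
                rw [hgs k hnot] at hk; omega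
              exact mem_Sge.1 (Finset.mem_sdiff.1 hkT).1
          have hiH : i ∈ Hs := mem_Sgt.2 (lt_of_le_of_lt hkt hik)
          exact hyH i hiH
      · have h2 : bsum b Hs = ∑ i ∈ Hs, b i := rfl
        have h3 : bsum b Hs < dj := htlt
        omega

end Market3

section Market4
open Finset
set_option linter.unusedSectionVars false

variable {Ω N : Type*} [Fintype Ω] [Fintype N] [DecidableEq Ω] [DecidableEq N]

lemma exists_stable_of_min (b : Ω → ℕ) (d : N → ℕ) (v : Ω → N → ℕ) {p : Ω → ℝ}
    (hp : (0:Ω → ℝ) ≤ p)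
    (hglob : ∀ q : Ω → ℝ, (0:Ω → ℝ) ≤ q → Lfun b d v p ≤ Lfun b d v q) :
    ∃ x : Ω → N → ℕ, Feasible b d x ∧
      ∀ j, InDemand b (d j) (fun i => v i j) p (fun i => x i j) := by
  classical
  choose H T c hdisj hcle hnec1 hnec2 hsuff hsize using
    fun j => buyer_structure b (d j) (fun i => v i j) p
  set m : Ω → ℕ := fun i => ∑ j, (if i ∈ H j then b i else 0) with hm
  have hmle : ∀ i, m i ≤ b i := by
    intro i
    obtain ⟨w, hw, hsum⟩ := demand_selection hp hglob {i}
    simp only [Finset.sum_singleton] at hsum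
    have h1 : ∑ j, (if i ∈ H j then b i else 0) ≤ ∑ j, w j i := by
      refine Finset.sum_le_sum fun j _ => ?_
      by_cases h : i ∈ H j
      · rw [if_pos h]; exact le_of_eq (hnec1 j _ (hw j) i h).symm
      · rw [if_neg h]; exact Nat.zero_le _
    exact le_trans h1 hsum
  have hcond : ∀ U : Finset N, ∑ j ∈ U, c j ≤ ∑ i ∈ U.biUnion T, (b i - m i) := by
    intro U
    set S := U.biUnion T with hS
    obtain ⟨w, hw, hsum⟩ := demand_selection hp hglob S
    have hkey : ∀ j, (∑ i ∈ S, (if i ∈ H j then b i else 0))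
        + (if j ∈ U then c j else 0) ≤ ∑ i ∈ S, w j i := by
      intro j
      have h1 : ∑ i ∈ S, (if i ∈ H j then b i else 0) = ∑ i ∈ S ∩ H j, b i :=
        Finset.sum_ite_mem S (H j) b
      have hw_full : ∑ i ∈ S ∩ H j, w j i = ∑ i ∈ S ∩ H j, b i :=
        Finset.sum_congr rfl fun i hi => hnec1 j _ (hw j) i (Finset.mem_inter.1 hi).2
      by_cases hjU : j ∈ U
      · have hTsub : T j ⊆ S \ (S ∩ H j) := by
          intro i hi
          have hiS : i ∈ S := Finset.mem_biUnion.2 ⟨j, hjU, hi⟩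
          refine Finset.mem_sdiff.2 ⟨hiS, fun hmem => ?_⟩
          exact (Finset.disjoint_left.1 (hdisj j)) (Finset.mem_inter.1 hmem).2 hi
        have h2 : c j ≤ ∑ i ∈ S \ (S ∩ H j), w j i :=
          le_trans (hnec2 j _ (hw j)) (Finset.sum_le_sum_of_subset hTsub)
        have h3 : (∑ i ∈ S \ (S ∩ H j), w j i) + ∑ i ∈ S ∩ H j, w j i = ∑ i ∈ S, w j i :=
          Finset.sum_sdiff Finset.inter_subset_left
        rw [if_pos hjU, h1]
        omega
      · rw [if_neg hjU, h1, add_zero, ← hw_full]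
        exact Finset.sum_le_sum_of_subset Finset.inter_subset_left
    have hsumkey := Finset.sum_le_sum fun j (_ : j ∈ (univ : Finset N)) => hkey j
    rw [Finset.sum_add_distrib] at hsumkey
    have e1 : ∑ j, ∑ i ∈ S, (if i ∈ H j then b i else 0) = ∑ i ∈ S, m i := by
      rw [Finset.sum_comm]
    have e2 : ∑ j, (if j ∈ U then c j else 0) = ∑ j ∈ U, c j := by
      rw [Finset.sum_ite_mem, Finset.univ_inter]
    have e3 : (∑ i ∈ S, (b i - m i)) + ∑ i ∈ S, m i = ∑ i ∈ S, b i := by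
      rw [← Finset.sum_add_distrib]
      exact Finset.sum_congr rfl fun i _ => by have := hmle i; omega
    rw [e1, e2] at hsumkey
    have e5 : ∑ j, ∑ i ∈ S, w j i ≤ ∑ i ∈ S, b i := hsum
    omega
  -- Hall's marriage theorem on unit-split demands and supplies
  set tfun : (Σ j : N, Fin (c j)) → Finset (Σ i : Ω, Fin (b i - m i)) :=
    fun x => (T x.1).sigma (fun i => (univ : Finset (Fin (b i - m i)))) with htfun
  have hHall : ∀ A : Finset (Σ j : N, Fin (c j)), A.card ≤ (A.biUnion tfun).card := by
    intro A
    set J := A.image Sigma.fst with hJ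
    have h2 : A.card ≤ ∑ j ∈ J, c j := by
      have h1 : A ⊆ J.sigma (fun j => (univ : Finset (Fin (c j)))) := fun x hx =>
        Finset.mem_sigma.2 ⟨Finset.mem_image_of_mem _ hx, mem_univ _⟩
      calc A.card ≤ (J.sigma fun j => (univ : Finset (Fin (c j)))).card :=
            Finset.card_le_card h1
        _ = ∑ j ∈ J, (univ : Finset (Fin (c j))).card := Finset.card_sigma _ _
        _ = ∑ j ∈ J, c j := Finset.sum_congr rfl fun j _ => by
            rw [Finset.card_univ, Fintype.card_fin]
    have h3 : A.biUnion tfun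
        = (J.biUnion T).sigma (fun i => (univ : Finset (Fin (b i - m i)))) := by
      ext ⟨i, u⟩
      simp only [Finset.mem_biUnion, Finset.mem_sigma, Finset.mem_univ, and_true, htfun,
        hJ, Finset.mem_image]
      constructor
      · rintro ⟨x, hxA, hx⟩
        exact ⟨x.1, ⟨x, hxA, rfl⟩, hx⟩
      · rintro ⟨j, ⟨a, haA, haj⟩, hiT⟩
        refine ⟨a, haA, ?_⟩
        rw [haj]; exact hiT
    have h4 : ((J.biUnion T).sigma
        (fun i => (univ : Finset (Fin (b i - m i))))).card = ∑ i ∈ J.biUnion T, (b i - m i) := by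
      rw [Finset.card_sigma]
      exact Finset.sum_congr rfl fun i _ => by rw [Finset.card_univ, Fintype.card_fin]
    rw [h3, h4]
    exact le_trans h2 (hcond J)
  obtain ⟨f, hfinj, hfmem⟩ :=
    (Finset.all_card_le_biUnion_card_iff_exists_injective tfun).1 hHall
  have hfT : ∀ x, (f x).1 ∈ T x.1 := by
    intro x
    have := hfmem x
    rw [htfun] at this
    exact (Finset.mem_sigma.1 this).1
  set g : N → Ω → ℕ := fun j i =>
    ((univ : Finset (Σ j : N, Fin (c j))).filter fun x => x.1 = j ∧ (f x).1 = i).card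
    with hg
  -- g is supported on T j
  have hgT : ∀ j i, i ∉ T j → g j i = 0 := by
    intro j i hiT
    rw [hg, Finset.card_eq_zero, Finset.filter_eq_empty_iff]
    rintro x _ ⟨hx1, hx2⟩
    apply hiT
    rw [← hx2, ← hx1]
    exact hfT x
  -- row sums of g
  have hgc : ∀ j, ∑ i, g j i = c j := by
    intro j
    have hA : (univ : Finset (Σ j : N, Fin (c j))).filter (fun x => x.1 = j)
        = ({j} : Finset N).sigma (fun j => (univ : Finset (Fin (c j)))) := by
      ext ⟨j', s⟩
      simp [Finset.mem_sigma]
    have hcard : ((univ : Finset (Σ j : N, Fin (c j))).filter (fun x => x.1 = j)).card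
        = c j := by
      rw [hA, Finset.card_sigma]
      simp
    have hfib := Finset.card_eq_sum_card_fiberwise
      (f := fun x : (Σ j : N, Fin (c j)) => (f x).1)
      (s := (univ : Finset (Σ j : N, Fin (c j))).filter (fun x => x.1 = j))
      (t := univ) (fun x _ => mem_univ _)
    rw [hcard] at hfib
    rw [hg]
    rw [hfib]
    exact Finset.sum_congr rfl fun i _ => by rw [Finset.filter_filter]
  -- column sums of g
  have hgm : ∀ i, ∑ j, g j i ≤ b i - m i := by
    intro i
    set Ai := (univ : Finset (Σ j : N, Fin (c j))).filter (fun x => (f x).1 = i) with hAi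
    have hfib := Finset.card_eq_sum_card_fiberwise
      (f := fun x : (Σ j : N, Fin (c j)) => x.1) (s := Ai) (t := univ)
      (fun x _ => mem_univ _)
    have e1 : ∑ j, g j i = Ai.card := by
      rw [hfib]
      refine Finset.sum_congr rfl fun j _ => ?_
      rw [hg, hAi, Finset.filter_filter]
      exact congrArg Finset.card (Finset.filter_congr fun x _ => by tauto)
    have e2 : Ai.card ≤ b i - m i := by
      have himg : Ai.image f ⊆ ({i} : Finset Ω).sigma
          (fun i => (univ : Finset (Fin (b i - m i)))) := by
        intro y hy
        obtain ⟨x, hx, rfl⟩ := Finset.mem_image.1 hy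
        rw [hAi] at hx
        exact Finset.mem_sigma.2 ⟨Finset.mem_singleton.2 (Finset.mem_filter.1 hx).2,
          Finset.mem_univ _⟩
      have e3 : (Ai.image f).card = Ai.card := Finset.card_image_of_injective Ai hfinj
      have e4 : (({i} : Finset Ω).sigma
          (fun i => (univ : Finset (Fin (b i - m i))))).card = b i - m i := by
        rw [Finset.card_sigma]
        simp
      calc Ai.card = (Ai.image f).card := e3.symm
        _ ≤ _ := Finset.card_le_card himg
        _ = b i - m i := e4
    omega
  -- assemble the allocation
  refine ⟨fun i j => (if i ∈ H j then b i else 0) + g j i, ⟨fun i => ?_, fun j => ?_⟩, fun j => ?_⟩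
  · -- supply constraints
    show ∑ j, ((if i ∈ H j then b i else 0) + g j i) ≤ b i
    rw [Finset.sum_add_distrib]
    have h1 : ∑ j, (if i ∈ H j then b i else 0) = m i := by rw [hm]
    have := hgm i
    have := hmle i
    omega
  · -- demand constraints
    show ∑ i, ((if i ∈ H j then b i else 0) + g j i) ≤ d j
    rw [Finset.sum_add_distrib, Finset.sum_ite_mem, Finset.univ_inter, hgc j]
    exact hsize j
  · -- optimality
    refine hsuff j (g j) (fun i => ?_) (hgT j) (hgc j)
    have h1 : g j i ≤ ∑ j', g j' i :=
      Finset.single_le_sum (f := fun j' => g j' i) (fun j' _ => Nat.zero_le _) (mem_univ j)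
    have := hgm i
    omega

end Market4


/-- there exists a unique componentwise minimum competitive price vector. -/
theorem exists_unique_min_competitive_prices
    {Ω N : Type*} [Fintype Ω] [Fintype N]
    (b : Ω → ℕ) (d : N → ℕ) (v : Ω → N → ℕ) :
    ∃! pstar : Ω → ℝ, Competitive b d v pstar ∧
      ∀ q : Ω → ℝ, Competitive b d v q → ∀ i, pstar i ≤ q i := by
  classical
  obtain ⟨ps, hps0, hglob, hmin⟩ := exists_min_minimizer b d v
  have hcomp : Competitive b d v ps := by
    obtain ⟨x, hfeas, hdem⟩ := exists_stable_of_min b d v hps0 hglob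
    exact ⟨fun i => hps0 i, x, hfeas, hdem⟩
  have hlb : ∀ q, Competitive b d v q → ∀ i, ps i ≤ q i := by
    intro q hq
    have hq0 : (0 : Ω → ℝ) ≤ q := fun i => hq.1 i
    obtain ⟨x, hxf, hxd⟩ := hq.2
    have hmono : Lfun b d v q ≤ Lfun b d v (ps ⊔ q) :=
      Lfun_mono_of_stable x hxf.1 hxd le_sup_right
    have hsub := Lfun_submod b d v ps q
    have h1 : Lfun b d v ps ≤ Lfun b d v (ps ⊓ q) := hglob _ (le_inf hps0 hq0)
    have h2 : Lfun b d v (ps ⊓ q) = Lfun b d v ps := by linarith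
    have h3 := hmin (ps ⊓ q) (le_inf hps0 hq0) h2
    intro i
    have h4 : (ps ⊓ q) ≤ q := inf_le_right
    exact le_trans (h3 i) (h4 i)
  refine ⟨ps, ⟨hcomp, hlb⟩, ?_⟩
  rintro r ⟨hrc, hrlb⟩
  funext i
  exact le_antisymm (hrlb ps hcomp i) (hlb r hrc i)
end

section
/- Let p* be the componentwise minimum competitive price vector, i.e. p* is competitive and p*(i) ≤ q(i) for every object i and every competitive price vector q. Then there exists a feasible allocation x* such that: (1) x*(·,j) ∈ D_j(p*) for every buyer j; (2) every object with positive price is completely sold, i.e. ∑_{j∈N} x* i j = b i for every i with p*(i) > 0; and (3) as much as possible is sold, i.e. ∑_{i∈Ω} ∑_{j∈N} x* i j = min(∑_{i∈Ω} b i, ∑_{j∈N} d j). -/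
open Finset

set_option linter.unusedSectionVars false

namespace MCP

variable {Ω N : Type*} [Fintype Ω] [Fintype N] [DecidableEq Ω] [DecidableEq N]

section Bundles

variable (b : Ω → ℕ) (dj : ℕ) (v : Ω → ℕ) (p : Ω → ℝ)

/-- add one unit of object `a` -/
def bAdd (y : Ω → ℕ) (a : Ω) : Ω → ℕ := fun i => if i = a then y i + 1 else y i

/-- remove one unit of object `a` -/
def bSub (y : Ω → ℕ) (a : Ω) : Ω → ℕ := fun i => if i = a then y i - 1 else y i

/-- give one unit of `a`, take one unit of `c` -/
def bSwap (y : Ω → ℕ) (a c : Ω) : Ω → ℕ :=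
  fun i => if i = a then y i - 1 else if i = c then y i + 1 else y i

variable {y : Ω → ℕ} {a c : Ω}

lemma bAdd_cast (i : Ω) :
    ((bAdd y a i : ℕ) : ℝ) = (y i : ℝ) + (if i = a then 1 else 0) := by
  unfold bAdd; split <;> push_cast <;> ring

lemma bSub_cast (h : 1 ≤ y a) (i : Ω) :
    ((bSub y a i : ℕ) : ℝ) = (y i : ℝ) - (if i = a then 1 else 0) := by
  unfold bSub; by_cases h1 : i = a
  · subst h1; simp [Nat.cast_sub h]
  · simp [h1]

lemma bSwap_cast (h : 1 ≤ y a) (hac : a ≠ c) (i : Ω) :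
    ((bSwap y a c i : ℕ) : ℝ)
      = (y i : ℝ) - (if i = a then 1 else 0) + (if i = c then 1 else 0) := by
  unfold bSwap
  by_cases h1 : i = a
  · subst h1; simp [hac, Nat.cast_sub h]
  · by_cases h2 : i = c
    · subst h2; simp [h1]
    · simp [h1, h2]

lemma sum_bAdd : ∑ i, bAdd y a i = (∑ i, y i) + 1 := by
  have h : ∀ i, bAdd y a i = y i + (if i = a then 1 else 0) := by
    intro i; unfold bAdd; split <;> simp
  simp only [h, Finset.sum_add_distrib, Finset.sum_ite_eq' Finset.univ a fun _ => 1,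
    Finset.mem_univ, if_true]

lemma sum_bSub (h : 1 ≤ y a) : (∑ i, bSub y a i) + 1 = ∑ i, y i := by
  have key : ∀ i, bSub y a i + (if i = a then 1 else 0) = y i := by
    intro i; unfold bSub; by_cases h1 : i = a
    · subst h1; simp; omega
    · simp [h1]
  calc (∑ i, bSub y a i) + 1
      = ∑ i, (bSub y a i + (if i = a then 1 else 0)) := by
        rw [Finset.sum_add_distrib, Finset.sum_ite_eq' Finset.univ a fun _ => 1]; simp
    _ = ∑ i, y i := by simp only [key]

lemma sum_bSwap (h : 1 ≤ y a) (hac : a ≠ c) : ∑ i, bSwap y a c i = ∑ i, y i := by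
  have key : ∀ i, bSwap y a c i + (if i = a then 1 else 0)
      = y i + (if i = c then 1 else 0) := by
    intro i; unfold bSwap
    by_cases h1 : i = a
    · subst h1; simp [hac]; omega
    · by_cases h2 : i = c
      · subst h2; simp [h1]
      · simp [h1, h2]
  have h2 := Finset.sum_congr rfl (fun i (_ : i ∈ Finset.univ) => key i)
  rw [Finset.sum_add_distrib, Finset.sum_add_distrib,
    Finset.sum_ite_eq' Finset.univ a fun _ => 1,
    Finset.sum_ite_eq' Finset.univ c fun _ => 1] at h2
  simpa using h2

lemma utility_bAdd :
    utility v p (bAdd y a) = utility v p y + ((v a : ℝ) - p a) := by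
  unfold utility
  have h : ∀ i, ((v i : ℝ) - p i) * ((bAdd y a i : ℕ) : ℝ)
      = ((v i : ℝ) - p i) * (y i : ℝ) + (if i = a then ((v i : ℝ) - p i) else 0) := by
    intro i; rw [bAdd_cast]; split <;> ring
  rw [Finset.sum_congr rfl fun i _ => h i, Finset.sum_add_distrib,
    Finset.sum_ite_eq' Finset.univ a fun i => ((v i : ℝ) - p i)]
  simp

lemma utility_bSub (h : 1 ≤ y a) :
    utility v p (bSub y a) = utility v p y - ((v a : ℝ) - p a) := by
  unfold utility
  have hh : ∀ i, ((v i : ℝ) - p i) * ((bSub y a i : ℕ) : ℝ)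
      = ((v i : ℝ) - p i) * (y i : ℝ) - (if i = a then ((v i : ℝ) - p i) else 0) := by
    intro i; rw [bSub_cast h]; split <;> ring
  rw [Finset.sum_congr rfl fun i _ => hh i, Finset.sum_sub_distrib,
    Finset.sum_ite_eq' Finset.univ a fun i => ((v i : ℝ) - p i)]
  simp

lemma utility_bSwap (h : 1 ≤ y a) (hac : a ≠ c) :
    utility v p (bSwap y a c) = utility v p y - ((v a : ℝ) - p a) + ((v c : ℝ) - p c) := by
  unfold utility
  have hh : ∀ i, ((v i : ℝ) - p i) * ((bSwap y a c i : ℕ) : ℝ)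
      = ((v i : ℝ) - p i) * (y i : ℝ) - (if i = a then ((v i : ℝ) - p i) else 0)
        + (if i = c then ((v i : ℝ) - p i) else 0) := by
    intro i; rw [bSwap_cast h hac]
    by_cases h1 : i = a
    · have h2 : ¬ i = c := by rw [h1]; exact hac
      simp [h1, h2, hac, Ne.symm hac]; ring
    · by_cases h2 : i = c <;> simp [h1, h2, hac, Ne.symm hac] <;> ring
  rw [Finset.sum_congr rfl fun i _ => hh i]
  rw [Finset.sum_add_distrib, Finset.sum_sub_distrib,
    Finset.sum_ite_eq' Finset.univ a fun i => ((v i : ℝ) - p i),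
    Finset.sum_ite_eq' Finset.univ c fun i => ((v i : ℝ) - p i)]
  simp

end Bundles

end MCP

namespace MCP

open Classical

variable {Ω N : Type*} [Fintype Ω] [Fintype N] [DecidableEq Ω] [DecidableEq N]

section Market

variable (b : Ω → ℕ) (d : N → ℕ) (v : Ω → N → ℕ) (p : Ω → ℝ)

/-- margin of object `i` for buyer `j` -/
def mg (i : Ω) (j : N) : ℝ := (v i j : ℝ) - p i

/-- demand set membership -/
def InD (j : N) (y : Ω → ℕ) : Prop := InDemand b (d j) (fun i => v i j) p y

variable {b d v p}

lemma InD_bundle {j y} (h : InD b d v p j y) : IsBundle b (d j) y := h.1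

lemma InD_le {j y} (h : InD b d v p j y) {z} (hz : IsBundle b (d j) z) :
    utility (fun i => v i j) p z ≤ utility (fun i => v i j) p y := h.2 z hz

lemma InD_of_eq_utility {j y z} (h : InD b d v p j y) (hz : IsBundle b (d j) z)
    (he : utility (fun i => v i j) p z = utility (fun i => v i j) p y) :
    InD b d v p j z := ⟨hz, fun w hw => he ▸ h.2 w hw⟩

/-- L1 : a held object has nonnegative margin -/
lemma marg_nonneg {j z a} (hz : InD b d v p j z) (ha : 1 ≤ z a) : 0 ≤ mg v p a j := by
  have hb : IsBundle b (d j) (bSub z a) := by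
    refine ⟨fun i => ?_, ?_⟩
    · unfold bSub; split <;> [exact le_trans (Nat.sub_le _ _) (hz.1.1 _); exact hz.1.1 _]
    · have h2 := hz.1.2; have := sum_bSub (y := z) (a := a) ha; omega
  have := hz.2 _ hb
  rw [utility_bSub (v := fun i => v i j) (p := p) ha] at this
  unfold mg; linarith

/-- L3 : two demanded bundles, `z` has more of `t`, less of `g` : margins are equal
and the swap of `y` (give `g`, take `t`) is demanded. -/
lemma swap_demanded {j y z g t} (hy : InD b d v p j y) (hz : InD b d v p j z)
    (ht : y t < z t) (hg : z g < y g) :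
    mg v p g j = mg v p t j ∧ InD b d v p j (bSwap y g t) := by
  have hgt : g ≠ t := fun h => by subst h; omega
  have hg1 : 1 ≤ y g := by omega
  have hzt1 : 1 ≤ z t := by omega
  have htb : y t < b t := lt_of_lt_of_le ht (hz.1.1 t)
  have hgb : z g < b g := lt_of_lt_of_le hg (hy.1.1 g)
  -- z side : give t take g
  have hzb : IsBundle b (d j) (bSwap z t g) := by
    refine ⟨fun i => ?_, ?_⟩
    · unfold bSwap; split
      · exact le_trans (Nat.sub_le _ _) (hz.1.1 _)
      · split
        · rename_i h2; subst h2; omega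
        · exact hz.1.1 _
    · rw [sum_bSwap hzt1 (Ne.symm hgt)]; exact hz.1.2
  have h1 := hz.2 _ hzb
  rw [utility_bSwap (v := fun i => v i j) (p := p) hzt1 (Ne.symm hgt)] at h1
  -- y side : give g take t
  have hyb : IsBundle b (d j) (bSwap y g t) := by
    refine ⟨fun i => ?_, ?_⟩
    · unfold bSwap; split
      · exact le_trans (Nat.sub_le _ _) (hy.1.1 _)
      · split
        · rename_i h2; subst h2; omega
        · exact hy.1.1 _
    · rw [sum_bSwap hg1 hgt]; exact hy.1.2
  have h2 := hy.2 _ hyb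
  rw [utility_bSwap (v := fun i => v i j) (p := p) hg1 hgt] at h2
  have heq : mg v p g j = mg v p t j := by unfold mg at *; linarith
  refine ⟨heq, InD_of_eq_utility hy hyb ?_⟩
  rw [utility_bSwap (v := fun i => v i j) (p := p) hg1 hgt]
  unfold mg at heq; linarith

/-- L5 : transfer lemma. `z` demanded with strictly smaller total and less of `a`:
the margin of `a` is zero and `z` plus a unit of `a` is demanded. -/
lemma transfer_demanded {j y z a} (hy : InD b d v p j y) (hz : InD b d v p j z)
    (hsum : ∑ i, z i < ∑ i, y i) (ha : z a < y a) :
    mg v p a j = 0 ∧ InD b d v p j (bAdd z a) := by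
  have ha1 : 1 ≤ y a := by omega
  -- y side : removing a unit of a
  have hyb : IsBundle b (d j) (bSub y a) := by
    refine ⟨fun i => ?_, ?_⟩
    · unfold bSub; split <;> [exact le_trans (Nat.sub_le _ _) (hy.1.1 _); exact hy.1.1 _]
    · have h3 := hy.1.2; have := sum_bSub (y := y) (a := a) ha1; omega
  have h1 := hy.2 _ hyb
  rw [utility_bSub (v := fun i => v i j) (p := p) ha1] at h1
  -- z side : adding a unit of a
  have hzb : IsBundle b (d j) (bAdd z a) := by
    refine ⟨fun i => ?_, ?_⟩
    · unfold bAdd; split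
      · rename_i h2; subst h2; exact le_trans ha (hy.1.1 _)
      · exact hz.1.1 _
    · rw [sum_bAdd]; exact le_trans (by omega) hy.1.2
  have h2 := hz.2 _ hzb
  rw [utility_bAdd (v := fun i => v i j) (p := p)] at h2
  have heq : mg v p a j = 0 := by unfold mg at *; linarith
  refine ⟨heq, InD_of_eq_utility hz hzb ?_⟩
  rw [utility_bAdd (v := fun i => v i j) (p := p)]
  unfold mg at heq; linarith

/-- add lemma : `y` demanded with slack total, `z` demanded with more of `a` :
margin of `a` is zero and `y` plus a unit of `a` is demanded. -/
lemma add_demanded {j y z a} (hy : InD b d v p j y) (hz : InD b d v p j z)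
    (hsum : ∑ i, y i < d j) (ha : y a < z a) :
    mg v p a j = 0 ∧ InD b d v p j (bAdd y a) := by
  have h0 : 0 ≤ mg v p a j := marg_nonneg hz (by omega)
  have hyb : IsBundle b (d j) (bAdd y a) := by
    refine ⟨fun i => ?_, ?_⟩
    · unfold bAdd; split
      · rename_i h2; subst h2; exact le_trans ha (hz.1.1 _)
      · exact hy.1.1 _
    · rw [sum_bAdd]; omega
  have h2 := hy.2 _ hyb
  rw [utility_bAdd (v := fun i => v i j) (p := p)] at h2
  have heq : mg v p a j = 0 := by unfold mg at *; linarith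
  refine ⟨heq, InD_of_eq_utility hy hyb ?_⟩
  rw [utility_bAdd (v := fun i => v i j) (p := p)]
  unfold mg at heq; linarith

end Market

end MCP

namespace MCP

open Classical

variable {Ω N : Type*} [Fintype Ω] [Fintype N] [DecidableEq Ω] [DecidableEq N]

section Alloc

variable (b : Ω → ℕ) (d : N → ℕ) (v : Ω → N → ℕ) (p : Ω → ℝ)

def sold (x : Ω → N → ℕ) (i : Ω) : ℕ := ∑ j, x i j

def updA (x : Ω → N → ℕ) (j : N) (y : Ω → ℕ) : Ω → N → ℕ :=
  fun i j' => if j' = j then y i else x i j'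

variable {b d v p}

lemma updA_bundle (x : Ω → N → ℕ) (j : N) (y : Ω → ℕ) :
    (fun i => updA x j y i j) = y := by funext i; simp [updA]

lemma updA_bundle_ne (x : Ω → N → ℕ) {j j' : N} (h : j' ≠ j) (y : Ω → ℕ) :
    (fun i => updA x j y i j') = fun i => x i j' := by funext i; simp [updA, h]

lemma sold_updA (x : Ω → N → ℕ) (j : N) (y : Ω → ℕ) (i : Ω) :
    (sold (updA x j y) i : ℤ) = (sold x i : ℤ) - x i j + y i := by
  unfold sold updA
  push_cast
  have hpt : ∀ j', ((if j' = j then (y i : ℤ) else (x i j' : ℤ)))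
      = (x i j' : ℤ) + (if j' = j then (y i : ℤ) - x i j' else 0) := by
    intro j'
    by_cases hj : j' = j
    · subst hj; simp only [if_pos rfl, if_true]; ring
    · simp [hj]
  rw [Finset.sum_congr rfl fun j' _ => hpt j', Finset.sum_add_distrib,
    Finset.sum_ite_eq' Finset.univ j fun j' => (y i : ℤ) - x i j']
  simp only [Finset.mem_univ, if_true]
  ring

lemma coord_le_sold (x : Ω → N → ℕ) (i : Ω) (j : N) : x i j ≤ sold x i :=
  Finset.single_le_sum (f := fun j => x i j) (fun _ _ => Nat.zero_le _) (Finset.mem_univ j)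

lemma stable_bundle {x} (hx : Stable b d v p x) (j : N) : InD b d v p j (fun i => x i j) :=
  hx.2 j

lemma stable_coord_le_b {x} (hx : Stable b d v p x) (i : Ω) (j : N) : x i j ≤ b i :=
  le_trans (coord_le_sold x i j) (hx.1.1 i)

/-- replace buyer `j`'s bundle -/
lemma stable_updA {x j y} (hx : Stable b d v p x) (hy : InD b d v p j y)
    (hfeas : ∀ i, sold (updA x j y) i ≤ b i) : Stable b d v p (updA x j y) := by
  refine ⟨⟨hfeas, fun j' => ?_⟩, fun j' => ?_⟩
  · by_cases h : j' = j
    · subst h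
      have := (InD_bundle hy).2
      simpa [updA] using this
    · have : ∀ i, updA x j y i j' = x i j' := fun i => by simp [updA, h]
      simp only [this]; exact hx.1.2 j'
  · by_cases h : j' = j
    · subst h; rw [updA_bundle]; exact hy
    · rw [updA_bundle_ne _ h]; exact hx.2 j'

end Alloc

section Phi

variable (b : Ω → ℕ) (d : N → ℕ) (v : Ω → N → ℕ) (p : Ω → ℝ)

def Kc : ℕ := (∑ i, b i) + 1

noncomputable def Pval (x : Ω → N → ℕ) : ℕ := ∑ i ∈ Finset.univ.filter (fun i => 0 < p i), sold x i

def Tval (x : Ω → N → ℕ) : ℕ := ∑ i, sold x i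

noncomputable def Phi (x : Ω → N → ℕ) : ℕ := Kc b * Pval p x + Tval x

def allocF : Finset (Ω → N → ℕ) :=
  Fintype.piFinset fun i => Fintype.piFinset fun _ => Finset.range (b i + 1)

noncomputable def stableF : Finset (Ω → N → ℕ) := (allocF b).filter (Stable b d v p)

noncomputable def Gv : ℕ := (stableF b d v p).sup (Phi b p)

def SStar (x : Ω → N → ℕ) : Prop := Stable b d v p x ∧ Phi b p x = Gv b d v p

/-- the positively priced objects that are slack in some `Φ`-maximal stable allocation -/
noncomputable def Af : Finset Ω :=
  Finset.univ.filter fun i => 0 < p i ∧ ∃ x, SStar b d v p x ∧ sold x i < b i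

variable {b d v p}

lemma mem_stableF {x} : x ∈ stableF b d v p ↔ Stable b d v p x := by
  unfold stableF
  rw [Finset.mem_filter]
  constructor
  · exact fun h => h.2
  · intro hx
    refine ⟨?_, hx⟩
    unfold allocF
    rw [Fintype.mem_piFinset]
    intro i
    rw [Fintype.mem_piFinset]
    intro j
    rw [Finset.mem_range]
    exact Nat.lt_succ_of_le (stable_coord_le_b hx i j)

lemma Phi_le_Gv {x} (hx : Stable b d v p x) : Phi b p x ≤ Gv b d v p :=
  Finset.le_sup (mem_stableF.mpr hx)

lemma exists_sstar (hne : ∃ x, Stable b d v p x) : ∃ x, SStar b d v p x := by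
  obtain ⟨x0, hx0⟩ := hne
  obtain ⟨x, hx, hG⟩ := Finset.exists_mem_eq_sup (stableF b d v p)
    ⟨x0, mem_stableF.mpr hx0⟩ (Phi b p)
  exact ⟨x, mem_stableF.mp hx, hG.symm⟩

lemma mem_Af {i} : i ∈ Af b d v p ↔
    0 < p i ∧ ∃ x, SStar b d v p x ∧ sold x i < b i := by
  unfold Af; simp

lemma Tval_le_sum_b {x} (hx : Stable b d v p x) : Tval x ≤ ∑ i, b i :=
  Finset.sum_le_sum fun i _ => hx.1.1 i

lemma Tval_lt_Kc {x} (hx : Stable b d v p x) : Tval x < Kc b :=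
  Nat.lt_succ_of_le (Tval_le_sum_b hx)

/-- generic : sum over a finset of a `+e, -f` perturbed sold vector -/
lemma sumS_delta {x' x : Ω → N → ℕ} {e f : Ω}
    (h : ∀ i, (sold x' i : ℤ) = sold x i + (if i = e then 1 else 0) - (if i = f then 1 else 0))
    (S : Finset Ω) :
    (∑ i ∈ S, (sold x' i : ℤ))
      = ∑ i ∈ S, (sold x i : ℤ) + (if e ∈ S then 1 else 0) - (if f ∈ S then 1 else 0) := by
  rw [Finset.sum_congr rfl fun i _ => h i]
  rw [Finset.sum_sub_distrib, Finset.sum_add_distrib]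
  rw [Finset.sum_ite_eq' S e fun _ => (1 : ℤ), Finset.sum_ite_eq' S f fun _ => (1 : ℤ)]

/-- Φ after a `+e, -f` perturbation -/
lemma Phi_delta {x' x : Ω → N → ℕ} {e f : Ω}
    (h : ∀ i, (sold x' i : ℤ) = sold x i + (if i = e then 1 else 0) - (if i = f then 1 else 0)) :
    (Phi b p x' : ℤ) = Phi b p x
      + (Kc b : ℤ) * ((if 0 < p e then 1 else 0) - (if 0 < p f then 1 else 0)) := by
  unfold Phi Pval Tval
  have h1 := sumS_delta h (Finset.univ.filter (fun i => 0 < p i))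
  have h2 := sumS_delta h Finset.univ
  push_cast
  rw [h1, h2]
  simp only [Finset.mem_filter, Finset.mem_univ, true_and]
  ring

/-- Φ after adding a unit at `e` -/
lemma Phi_delta_add {x' x : Ω → N → ℕ} {e : Ω}
    (h : ∀ i, (sold x' i : ℤ) = sold x i + (if i = e then 1 else 0)) :
    (Phi b p x' : ℤ) = Phi b p x + (Kc b : ℤ) * (if 0 < p e then 1 else 0) + 1 := by
  unfold Phi Pval Tval
  have key : ∀ (S : Finset Ω), (∑ i ∈ S, (sold x' i : ℤ))
      = ∑ i ∈ S, (sold x i : ℤ) + (if e ∈ S then 1 else 0) := by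
    intro S
    rw [Finset.sum_congr rfl fun i (_ : i ∈ S) => h i, Finset.sum_add_distrib,
      Finset.sum_ite_eq' S e fun _ => (1 : ℤ)]
  have h1 := key (Finset.univ.filter (fun i => 0 < p i))
  have h2 := key Finset.univ
  push_cast
  rw [h1, h2]
  simp only [Finset.mem_filter, Finset.mem_univ, true_and, if_true]
  ring

end Phi

end MCP

namespace MCP

open Classical

variable {Ω N : Type*} [Fintype Ω] [Fintype N] [DecidableEq Ω] [DecidableEq N]
variable {b : Ω → ℕ} {d : N → ℕ} {v : Ω → N → ℕ} {p : Ω → ℝ}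

lemma sold_updA_bAdd (x : Ω → N → ℕ) (j : N) (a : Ω) (i : Ω) :
    (sold (updA x j (bAdd (fun i' => x i' j) a)) i : ℤ)
      = sold x i + (if i = a then 1 else 0) := by
  rw [sold_updA]
  unfold bAdd
  split <;> push_cast <;> ring

lemma sold_updA_bSwap (x : Ω → N → ℕ) (j : N) {g t : Ω} (hg : 1 ≤ x g j) (hgt : g ≠ t)
    (i : Ω) :
    (sold (updA x j (bSwap (fun i' => x i' j) g t)) i : ℤ)
      = sold x i + (if i = t then 1 else 0) - (if i = g then 1 else 0) := by
  rw [sold_updA]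
  unfold bSwap
  by_cases h1 : i = g
  · subst h1
    rw [if_pos rfl, if_pos rfl, if_neg hgt]
    push_cast [Nat.cast_sub hg]
    ring
  · by_cases h2 : i = t
    · subst h2
      rw [if_neg h1, if_pos rfl, if_pos rfl, if_neg h1]
      push_cast; ring
    · rw [if_neg h1, if_neg h2, if_neg h2, if_neg h1]
      push_cast; ring

/-- bundles finset -/
def bundleF (b : Ω → ℕ) (dj : ℕ) : Finset (Ω → ℕ) :=
  (Fintype.piFinset fun i => Finset.range (b i + 1)).filter (fun y => ∑ i, y i ≤ dj)

lemma mem_bundleF {dj : ℕ} {y : Ω → ℕ} : y ∈ bundleF b dj ↔ IsBundle b dj y := by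
  unfold bundleF IsBundle
  rw [Finset.mem_filter, Fintype.mem_piFinset]
  simp only [Finset.mem_range, Nat.lt_succ_iff]

/-- The ε-reduction contradiction : if some Φ-maximal stable allocation gives every
buyer a personal-best amount of `Af`-mass, prices can be lowered on `Af`. -/
lemma eps_contra
    (hp0 : ∀ i, 0 ≤ p i)
    (hmin : ∀ q : Ω → ℝ, Competitive b d v q → ∀ i, p i ≤ q i)
    (hAne : (Af b d v p).Nonempty)
    (x : Ω → N → ℕ) (hx : Stable b d v p x)
    (hmax : ∀ j z, InD b d v p j z →
      ∑ i ∈ Af b d v p, z i ≤ ∑ i ∈ Af b d v p, x i j) : False := by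
  set A := Af b d v p with hA
  have hpos : ∀ i ∈ A, 0 < p i := fun i hi => (mem_Af.mp hi).1
  -- optimum utilities
  set U : N → ℝ := fun j => utility (fun i => v i j) p (fun i => x i j) with hU
  -- gap
  set gapS : Finset ℝ := Finset.univ.biUnion (fun j =>
    ((bundleF b (d j)).image (fun w => U j - utility (fun i => v i j) p w)).filter
      (fun t => 0 < t)) with hgapS
  set Γ : Finset ℝ := insert (1 : ℝ) gapS with hΓ
  have hΓne : Γ.Nonempty := ⟨1, Finset.mem_insert_self _ _⟩
  set γ : ℝ := Γ.min' hΓne with hγ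
  have hγpos : 0 < γ := by
    have hm := Γ.min'_mem hΓne
    rw [← hγ] at hm
    rcases Finset.mem_insert.mp hm with h | h
    · rw [h]; norm_num
    · rw [hgapS] at h
      obtain ⟨j, -, hj⟩ := Finset.mem_biUnion.mp h
      exact (Finset.mem_filter.mp hj).2
  have hγle : ∀ j (w : Ω → ℕ), IsBundle b (d j) w →
      utility (fun i => v i j) p w < U j → γ ≤ U j - utility (fun i => v i j) p w := by
    intro j w hw hlt
    apply Finset.min'_le
    apply Finset.mem_insert_of_mem
    rw [hgapS]
    apply Finset.mem_biUnion.mpr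
    refine ⟨j, Finset.mem_univ _, Finset.mem_filter.mpr ⟨?_, by linarith⟩⟩
    exact Finset.mem_image.mpr ⟨w, mem_bundleF.mpr hw, rfl⟩
  set C : ℕ := (∑ i ∈ A, b i) + 1 with hC
  have hCpos : (0 : ℝ) < C := by positivity
  set pmS : Finset ℝ := A.image p with hpmS
  have hpmSne : pmS.Nonempty := hAne.image p
  set pm : ℝ := pmS.min' hpmSne with hpm
  have hpmpos : 0 < pm := by
    have := pmS.min'_mem hpmSne
    rw [← hpm] at this
    rw [hpmS] at this
    obtain ⟨i, hi, hip⟩ := Finset.mem_image.mp this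
    rw [← hip]; exact hpos i hi
  have hpmle : ∀ i ∈ A, pm ≤ p i := by
    intro i hi
    exact Finset.min'_le _ _ (Finset.mem_image_of_mem p hi)
  set ε : ℝ := min (γ / C) pm with hε
  have hεpos : 0 < ε := lt_min (by positivity) hpmpos
  set q : Ω → ℝ := fun i => if i ∈ A then p i - ε else p i with hq
  -- utility at q
  have hkey : ∀ j (w : Ω → ℕ),
      utility (fun i => v i j) q w
        = utility (fun i => v i j) p w + ε * ∑ i ∈ A, (w i : ℝ) := by
    intro j w
    unfold utility
    have hpt : ∀ i, ((v i j : ℝ) - q i) * (w i : ℝ)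
        = ((v i j : ℝ) - p i) * (w i : ℝ) + (if i ∈ A then ε * (w i : ℝ) else 0) := by
      intro i
      rw [hq]
      by_cases hiA : i ∈ A <;> simp [hiA] <;> ring
    rw [Finset.sum_congr rfl fun i _ => hpt i, Finset.sum_add_distrib]
    congr 1
    rw [Finset.sum_ite_mem, Finset.univ_inter, Finset.mul_sum]
  -- x is stable at q
  have hstab : Stable b d v q x := by
    refine ⟨hx.1, fun j => ⟨(hx.2 j).1, fun w hw => ?_⟩⟩
    rw [hkey, hkey]
    have hle : utility (fun i => v i j) p w ≤ U j := (hx.2 j).2 w hw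
    rcases eq_or_lt_of_le hle with heq | hlt
    · -- w is also demanded at p
      have hwInD : InD b d v p j w := by
        refine ⟨hw, fun z hz => ?_⟩
        rw [heq]; exact (hx.2 j).2 z hz
      have hsle := hmax j w hwInD
      have hcast : (∑ i ∈ A, (w i : ℝ)) ≤ ∑ i ∈ A, (x i j : ℝ) := by
        exact_mod_cast hsle
      rw [heq]
      nlinarith [hεpos.le]
    · -- strict gap
      have hg := hγle j w hw hlt
      have hwb : (∑ i ∈ A, (w i : ℝ)) ≤ (C : ℝ) - 1 := by
        have h1 : ∑ i ∈ A, w i ≤ ∑ i ∈ A, b i := Finset.sum_le_sum fun i _ => hw.1 i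
        have h2 : ((∑ i ∈ A, w i : ℕ) : ℝ) ≤ ((∑ i ∈ A, b i : ℕ) : ℝ) := by exact_mod_cast h1
        rw [hC]
        push_cast at h2 ⊢
        linarith
      have hεC : ε * ((C : ℝ) - 1) < γ := by
        have h1 : ε ≤ γ / C := min_le_left _ _
        have h2 : ε * ((C:ℝ) - 1) ≤ (γ / C) * ((C:ℝ) - 1) := by
          apply mul_le_mul_of_nonneg_right h1
          have : (1:ℝ) ≤ C := by exact_mod_cast Nat.one_le_iff_ne_zero.mpr (by omega)
          linarith
        have h3 : (γ / C) * ((C:ℝ) - 1) < γ := by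
          have hlt1 : ((C:ℝ) - 1) / C < 1 := by rw [div_lt_one hCpos]; linarith
          calc (γ/C) * ((C:ℝ)-1) = γ * (((C:ℝ)-1)/C) := by ring
          _ < γ * 1 := mul_lt_mul_of_pos_left hlt1 hγpos
          _ = γ := by ring
        linarith
      have hwA : ε * (∑ i ∈ A, (w i : ℝ)) < γ := by
        have : ε * (∑ i ∈ A, (w i : ℝ)) ≤ ε * ((C : ℝ) - 1) := by
          apply mul_le_mul_of_nonneg_left hwb hεpos.le
        linarith
      have hxA : (0:ℝ) ≤ ε * ∑ i ∈ A, (x i j : ℝ) := by positivity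
      have : utility (fun i => v i j) p w + ε * ∑ i ∈ A, (w i : ℝ) < U j := by linarith
      linarith
  -- q is competitive
  have hqcomp : Competitive b d v q := by
    refine ⟨fun i => ?_, ⟨x, hstab⟩⟩
    rw [hq]
    by_cases hiA : i ∈ A
    · simp only [hiA, if_pos]
      have := hpmle i hiA
      have h2 : ε ≤ pm := min_le_right _ _
      linarith
    · simp only [hiA, if_neg, ite_false]
      exact hp0 i
  -- contradiction with minimality
  obtain ⟨i0, hi0⟩ := hAne
  have := hmin q hqcomp i0
  rw [hq] at this
  simp only [hi0, if_pos] at this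
  linarith

end MCP

namespace MCP

open Classical

variable {Ω N : Type*} [Fintype Ω] [Fintype N] [DecidableEq Ω] [DecidableEq N]
variable {b : Ω → ℕ} {d : N → ℕ} {v : Ω → N → ℕ} {p : Ω → ℝ}

lemma sumS_bSwap {y : Ω → ℕ} {g t : Ω} {S : Finset Ω} (hgS : g ∈ S) (htS : t ∈ S)
    (h1 : 1 ≤ y g) (hgt : g ≠ t) :
    ∑ i ∈ S, bSwap y g t i = ∑ i ∈ S, y i := by
  have key : ∀ i, bSwap y g t i + (if i = g then 1 else 0)
      = y i + (if i = t then 1 else 0) := by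
    intro i; unfold bSwap
    by_cases h1' : i = g
    · subst h1'; simp [hgt]; omega
    · by_cases h2 : i = t
      · subst h2; simp [h1']
      · simp [h1', h2]
  have h2 := Finset.sum_congr rfl (fun i (_ : i ∈ S) => key i)
  rw [Finset.sum_add_distrib, Finset.sum_add_distrib,
    Finset.sum_ite_eq' S g fun _ => 1,
    Finset.sum_ite_eq' S t fun _ => 1] at h2
  simpa [hgS, htS] using h2

lemma norm_swap {z y : Ω → ℕ} {g t : Ω} (hg : z g < y g) (ht : y t < z t) (hgt : g ≠ t) :
    (∑ i, ((z i : ℤ) - bSwap y g t i).natAbs) + 2 = ∑ i, ((z i : ℤ) - y i).natAbs := by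
  have key : ∀ i, ((z i : ℤ) - bSwap y g t i).natAbs
      + (if i = g then 1 else 0) + (if i = t then 1 else 0)
      = ((z i : ℤ) - y i).natAbs := by
    intro i; unfold bSwap
    by_cases h1 : i = g
    · subst h1; simp only [if_pos rfl, if_neg hgt, if_true, if_false]
      have h2 : 1 ≤ y i := by omega
      omega
    · by_cases h2 : i = t
      · subst h2; simp only [if_neg h1, if_pos rfl, if_false, if_true]
        omega
      · simp [h1, h2]
  have h2 := Finset.sum_congr rfl (fun i (_ : i ∈ Finset.univ) => key i)
  rw [Finset.sum_add_distrib, Finset.sum_add_distrib,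
    Finset.sum_ite_eq' Finset.univ g fun _ => 1,
    Finset.sum_ite_eq' Finset.univ t fun _ => 1] at h2
  simpa [add_assoc] using h2

/-- final assembly when no positively priced object is ever slack -/
lemma endgame (hp0 : ∀ i, 0 ≤ p i) (hAe : Af b d v p = ∅) {x : Ω → N → ℕ}
    (hx : SStar b d v p x) :
    (∀ i, 0 < p i → sold x i = b i) ∧ ∑ i, ∑ j, x i j = min (∑ i, b i) (∑ j, d j) := by
  have hposfull : ∀ i, 0 < p i → sold x i = b i := by
    intro i hpi
    by_contra hne
    have hlt : sold x i < b i := lt_of_le_of_ne (hx.1.1.1 i) hne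
    have : i ∈ Af b d v p := mem_Af.mpr ⟨hpi, x, hx, hlt⟩
    rw [hAe] at this
    exact absurd this (Finset.notMem_empty i)
  refine ⟨hposfull, ?_⟩
  have hTb : ∑ i, ∑ j, x i j ≤ ∑ i, b i := Finset.sum_le_sum fun i _ => hx.1.1.1 i
  have hTd : ∑ i, ∑ j, x i j ≤ ∑ j, d j := by
    rw [Finset.sum_comm]
    exact Finset.sum_le_sum fun j _ => hx.1.1.2 j
  refine le_antisymm (le_min hTb hTd) ?_
  by_contra hlt
  push_neg at hlt
  rw [lt_min_iff] at hlt
  obtain ⟨hltb, hltd⟩ := hlt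
  -- slack object
  have hobj : ∃ i, sold x i < b i := by
    by_contra hno
    push_neg at hno
    have : ∑ i, b i ≤ ∑ i, (sold x i) := Finset.sum_le_sum fun i _ => hno i
    unfold sold at this
    omega
  obtain ⟨i0, hi0⟩ := hobj
  have hpi0 : p i0 = 0 := by
    rcases lt_or_ge 0 (p i0) with h | h
    · exact absurd (hposfull i0 h) (by omega)
    · linarith [hp0 i0]
  -- slack buyer
  have hbuy : ∃ j, ∑ i, x i j < d j := by
    by_contra hno
    push_neg at hno
    have : ∑ j, d j ≤ ∑ j, ∑ i, x i j := Finset.sum_le_sum fun j _ => hno j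
    rw [← Finset.sum_comm] at this
    omega
  obtain ⟨j0, hj0⟩ := hbuy
  have hyD : InD b d v p j0 (fun i => x i j0) := hx.1.2 j0
  have hm : 0 ≤ mg v p i0 j0 := by
    unfold mg; rw [hpi0, sub_zero]; positivity
  rcases eq_or_lt_of_le hm with hm0 | hmpos
  · -- zero margin : add a unit, contradicting Φ maximality
    have hbnd : IsBundle b (d j0) (bAdd (fun i => x i j0) i0) := by
      refine ⟨fun i => ?_, ?_⟩
      · unfold bAdd; split
        · rename_i h2
          have h3 := coord_le_sold x i0 j0
          show x i j0 + 1 ≤ b i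
          rw [h2]
          omega
        · exact stable_coord_le_b hx.1 _ _
      · rw [sum_bAdd]
        show (∑ i, x i j0) + 1 ≤ d j0
        omega
    have hD : InD b d v p j0 (bAdd (fun i => x i j0) i0) := by
      apply InD_of_eq_utility hyD hbnd
      rw [utility_bAdd (v := fun i => v i j0) (p := p)]
      unfold mg at hm0
      linarith
    have hΔ := sold_updA_bAdd x j0 i0
    have hfeas : ∀ i, sold (updA x j0 (bAdd (fun i' => x i' j0) i0)) i ≤ b i := by
      intro i
      have h1 := hΔ i
      have h2 : sold x i ≤ b i := hx.1.1.1 i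
      by_cases h : i = i0
      · rw [h] at h1 h2 ⊢; rw [if_pos rfl] at h1; omega
      · rw [if_neg h] at h1; omega
    have hst : Stable b d v p (updA x j0 (bAdd (fun i' => x i' j0) i0)) :=
      stable_updA hx.1 hD hfeas
    have hP := Phi_delta_add (b := b) (p := p) hΔ
    rw [hpi0] at hP
    simp only [lt_self_iff_false, if_false, mul_zero, add_zero] at hP
    have hle := Phi_le_Gv hst
    have hxG := hx.2
    omega
  · -- positive margin : adding improves, contradicting demand
    have hbnd : IsBundle b (d j0) (bAdd (fun i => x i j0) i0) := by
      refine ⟨fun i => ?_, ?_⟩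
      · unfold bAdd; split
        · rename_i h2
          have h3 := coord_le_sold x i0 j0
          show x i j0 + 1 ≤ b i
          rw [h2]
          omega
        · exact stable_coord_le_b hx.1 _ _
      · rw [sum_bAdd]
        show (∑ i, x i j0) + 1 ≤ d j0
        omega
    have := hyD.2 _ hbnd
    rw [utility_bAdd (v := fun i => v i j0) (p := p)] at this
    unfold mg at hmpos
    linarith

end MCP

namespace MCP

open Classical

variable {Ω N : Type*} [Fintype Ω] [Fintype N] [DecidableEq Ω] [DecidableEq N]
variable {b : Ω → ℕ} {d : N → ℕ} {v : Ω → N → ℕ} {p : Ω → ℝ}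

/-- The slack case of the outer argument : a minimal-norm deficiency witness whose
wanted object is slack leads to a contradiction. -/
lemma slack_case
    {x : Ω → N → ℕ} {j : N} {z : Ω → ℕ} {istar : Ω} {n0 : ℕ}
    (hxs : SStar b d v p x)
    (hz : InD b d v p j z)
    (hdef : ∑ i ∈ Af b d v p, x i j < ∑ i ∈ Af b d v p, z i)
    (hiA : istar ∈ Af b d v p)
    (hwant : x istar j < z istar)
    (hslack : sold x istar < b istar)
    (hnorm : (∑ i, ((z i : ℤ) - x i j).natAbs) = n0)
    (hpool : ∀ (x' : Ω → N → ℕ) (j' : N) (z' : Ω → ℕ), SStar b d v p x' →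
      InD b d v p j' z' → (∑ i ∈ Af b d v p, x' i j') < ∑ i ∈ Af b d v p, z' i →
      n0 ≤ ∑ i, ((z' i : ℤ) - x' i j').natAbs) :
    False := by
  have hyD : InD b d v p j (fun i => x i j) := hxs.1.2 j
  have hpistar : 0 < p istar := (mem_Af.mp hiA).1
  have hKc : 1 ≤ Kc b := by unfold Kc; omega
  by_cases hrow : ∑ i, x i j < d j
  · -- add case
    obtain ⟨hm0, hyaD⟩ := add_demanded hyD hz (by exact hrow) (by exact hwant)
    have hΔ := sold_updA_bAdd x j istar
    have hfeas : ∀ i, sold (updA x j (bAdd (fun i' => x i' j) istar)) i ≤ b i := by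
      intro i
      have h1 := hΔ i
      have h2 : sold x i ≤ b i := hxs.1.1.1 i
      by_cases h : i = istar
      · rw [h] at h1 h2 ⊢; rw [if_pos rfl] at h1; omega
      · rw [if_neg h] at h1; omega
    have hst : Stable b d v p (updA x j (bAdd (fun i' => x i' j) istar)) :=
      stable_updA hxs.1 hyaD hfeas
    have hP := Phi_delta_add (b := b) (p := p) hΔ
    rw [if_pos hpistar] at hP
    have hle := Phi_le_Gv hst
    have hxG := hxs.2
    omega
  · -- swap case
    have hrow' : ∑ i, x i j = d j := le_antisymm (hyD.1.2) (not_lt.mp hrow)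
    have hex : ∃ i1, z i1 < x i1 j := by
      by_contra hno
      push_neg at hno
      have hlt : ∑ i, x i j < ∑ i, z i :=
        Finset.sum_lt_sum (fun i _ => hno i) ⟨istar, Finset.mem_univ _, hwant⟩
      have := hz.1.2
      omega
    obtain ⟨i1, hi1⟩ := hex
    have hne : i1 ≠ istar := fun h => by rw [h] at hi1; omega
    have hg1 : 1 ≤ x i1 j := by omega
    obtain ⟨hmeq, hswD⟩ := swap_demanded hyD hz (by exact hwant) (by exact hi1)
    have hΔ := sold_updA_bSwap x j hg1 hne
    have hfeas : ∀ i, sold (updA x j (bSwap (fun i' => x i' j) i1 istar)) i ≤ b i := by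
      intro i
      have h1 := hΔ i
      have h2 : sold x i ≤ b i := hxs.1.1.1 i
      by_cases h : i = istar
      · rw [h] at h1 h2 ⊢
        rw [if_pos rfl, if_neg (Ne.symm hne)] at h1
        omega
      · by_cases h' : i = i1
        · rw [h'] at h1 h2 ⊢
          rw [if_neg hne, if_pos rfl] at h1
          omega
        · rw [if_neg h, if_neg h'] at h1; omega
    have hst : Stable b d v p (updA x j (bSwap (fun i' => x i' j) i1 istar)) :=
      stable_updA hxs.1 hswD hfeas
    have hP := Phi_delta (b := b) (p := p) (e := istar) (f := i1) hΔ
    rw [if_pos hpistar] at hP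
    by_cases hp1 : 0 < p i1
    · rw [if_pos hp1] at hP
      have hPeq : Phi b p (updA x j (bSwap (fun i' => x i' j) i1 istar)) = Phi b p x := by
        omega
      have hx's : SStar b d v p (updA x j (bSwap (fun i' => x i' j) i1 istar)) :=
        ⟨hst, by rw [hPeq]; exact hxs.2⟩
      have hbund : ∀ i, updA x j (bSwap (fun i' => x i' j) i1 istar) i j
          = bSwap (fun i' => x i' j) i1 istar i := by
        intro i; simp [updA]
      by_cases hi1A : i1 ∈ Af b d v p
      · -- smaller witness
        have hsum : ∑ i ∈ Af b d v p, updA x j (bSwap (fun i' => x i' j) i1 istar) i j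
            = ∑ i ∈ Af b d v p, x i j := by
          rw [Finset.sum_congr rfl fun i _ => hbund i]
          exact sumS_bSwap hi1A hiA hg1 hne
        have hdef' : ∑ i ∈ Af b d v p, updA x j (bSwap (fun i' => x i' j) i1 istar) i j
            < ∑ i ∈ Af b d v p, z i := by rw [hsum]; exact hdef
        have hnorm' := norm_swap (z := z) (y := fun i' => x i' j) hi1 hwant hne
        have hp2 := hpool _ j z hx's hz hdef'
        have heq : (∑ i, ((z i : ℤ) - updA x j (bSwap (fun i' => x i' j) i1 istar) i j).natAbs)
            = ∑ i, ((z i : ℤ) - bSwap (fun i' => x i' j) i1 istar i).natAbs := by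
          apply Finset.sum_congr rfl
          intro i _
          rw [hbund i]
        rw [heq] at hp2
        have hnorm2 : (∑ i, ((z i : ℤ) - (bSwap (fun i' => x i' j) i1 istar i : ℤ)).natAbs) + 2
            = ∑ i, ((z i : ℤ) - (x i j : ℤ)).natAbs := hnorm'
        omega
      · -- i1 must belong to Af
        have hsold1 : sold (updA x j (bSwap (fun i' => x i' j) i1 istar)) i1 < b i1 := by
          have h1 := hΔ i1
          rw [if_neg hne, if_pos rfl] at h1
          have h2 : sold x i1 ≤ b i1 := hxs.1.1.1 i1
          omega
        exact hi1A (mem_Af.mpr ⟨hp1, _, hx's, hsold1⟩)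
    · rw [if_neg hp1] at hP
      have hle := Phi_le_Gv hst
      have hxG := hxs.2
      omega

end MCP

namespace MCP

open Classical

variable {Ω N : Type*} [Fintype Ω] [Fintype N] [DecidableEq Ω] [DecidableEq N]
variable {b : Ω → ℕ} {d : N → ℕ} {v : Ω → N → ℕ} {p : Ω → ℝ}

lemma bSwap_castZ {y : Ω → ℕ} {a c : Ω} (h : 1 ≤ y a) (hac : a ≠ c) (i : Ω) :
    ((bSwap y a c i : ℕ) : ℤ)
      = (y i : ℤ) - (if i = a then 1 else 0) + (if i = c then 1 else 0) := by
  unfold bSwap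
  by_cases h1 : i = a
  · subst h1; simp [hac]; omega
  · by_cases h2 : i = c
    · subst h2; simp [h1]
    · simp [h1, h2]

lemma exists_gt_coord {α : Type*} [Fintype α] {f g : α → ℕ}
    (h : ∑ j, f j < ∑ j, g j) : ∃ j, f j < g j := by
  by_contra hno
  push_neg at hno
  have := Finset.sum_le_sum (s := Finset.univ) fun j (_ : j ∈ Finset.univ) => hno j
  omega

lemma exists_lt_coord2 {α : Type*} [Fintype α] {f g : α → ℕ} {j0 : α}
    (h : ∑ j, f j ≤ ∑ j, g j) (hj0 : g j0 < f j0) : ∃ j, f j < g j := by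
  by_contra hno
  push_neg at hno
  have := Finset.sum_lt_sum (fun j (_ : j ∈ Finset.univ) => hno j)
    ⟨j0, Finset.mem_univ _, hj0⟩
  omega

/-- a walk step : buyer, give-object, take-object -/
abbrev Stp (Ω N : Type*) := N × Ω × Ω

/-- apply the x-side moves of a walk : each step's buyer gives a unit of the
give-object and takes a unit of the take-object (relative to base `x`). -/
def applyF (x : Ω → N → ℕ) : List (Stp Ω N) → Ω → N → ℕ
  | [] => x
  | s :: L => updA (applyF x L) s.1 (bSwap (fun i => x i s.1) s.2.1 s.2.2)

/-- apply the partner-side moves : each step's buyer gives a unit of the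
take-object and takes a unit of the give-object (relative to base `x`). -/
def applyRev (x : Ω → N → ℕ) : List (Stp Ω N) → Ω → N → ℕ
  | [] => x
  | s :: L => updA (applyRev x L) s.1 (bSwap (fun i => x i s.1) s.2.2 s.2.1)

/-- chain predicate : reversed walk list `L` (newest first) starting at `i0`,
current object `cur`. -/
def Chn (i0 : Ω) : List (Stp Ω N) → Ω → Prop
  | [], cur => cur = i0
  | s :: L, cur => s.2.2 = cur ∧ Chn i0 L s.2.1

lemma applyF_ne (x : Ω → N → ℕ) {L : List (Stp Ω N)} {j : N}
    (hj : j ∉ L.map (·.1)) : ∀ i, applyF x L i j = x i j := by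
  induction L with
  | nil => intro i; rfl
  | cons s L ih =>
    intro i
    simp only [List.map_cons, List.mem_cons] at hj
    push_neg at hj
    unfold applyF updA
    rw [if_neg hj.1]
    exact ih hj.2 i

lemma applyRev_ne (x : Ω → N → ℕ) {L : List (Stp Ω N)} {j : N}
    (hj : j ∉ L.map (·.1)) : ∀ i, applyRev x L i j = x i j := by
  induction L with
  | nil => intro i; rfl
  | cons s L ih =>
    intro i
    simp only [List.map_cons, List.mem_cons] at hj
    push_neg at hj
    unfold applyRev updA
    rw [if_neg hj.1]
    exact ih hj.2 i

lemma applyF_mem (x : Ω → N → ℕ) {L : List (Stp Ω N)} (hnd : (L.map (·.1)).Nodup)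
    {s : Stp Ω N} (hs : s ∈ L) :
    ∀ i, applyF x L i s.1 = bSwap (fun i => x i s.1) s.2.1 s.2.2 i := by
  induction L with
  | nil => cases hs
  | cons t L ih =>
    intro i
    simp only [List.map_cons, List.nodup_cons] at hnd
    rcases List.mem_cons.mp hs with h | h
    · subst h
      unfold applyF updA
      rw [if_pos rfl]
    · have hne : s.1 ≠ t.1 := by
        intro he
        exact hnd.1 (he ▸ List.mem_map_of_mem (f := (·.1)) h)
      unfold applyF updA
      rw [if_neg hne]
      exact ih hnd.2 h i

lemma applyRev_mem (x : Ω → N → ℕ) {L : List (Stp Ω N)} (hnd : (L.map (·.1)).Nodup)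
    {s : Stp Ω N} (hs : s ∈ L) :
    ∀ i, applyRev x L i s.1 = bSwap (fun i => x i s.1) s.2.2 s.2.1 i := by
  induction L with
  | nil => cases hs
  | cons t L ih =>
    intro i
    simp only [List.map_cons, List.nodup_cons] at hnd
    rcases List.mem_cons.mp hs with h | h
    · subst h
      unfold applyRev updA
      rw [if_pos rfl]
    · have hne : s.1 ≠ t.1 := by
        intro he
        exact hnd.1 (he ▸ List.mem_map_of_mem (f := (·.1)) h)
      unfold applyRev updA
      rw [if_neg hne]
      exact ih hnd.2 h i

/-- the sold vector after an x-side walk move -/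
lemma sold_applyF (x : Ω → N → ℕ) {L : List (Stp Ω N)} {i0 cur : Ω}
    (hch : Chn i0 L cur) (hnd : (L.map (·.1)).Nodup)
    (hga : ∀ s ∈ L, 1 ≤ x s.2.1 s.1) (hgt : ∀ s ∈ L, s.2.1 ≠ s.2.2) (i : Ω) :
    (sold (applyF x L) i : ℤ)
      = sold x i - (if i = i0 then 1 else 0) + (if i = cur then 1 else 0) := by
  induction L generalizing cur with
  | nil =>
    unfold Chn at hch
    subst hch
    simp [applyF]
  | cons s L ih =>
    obtain ⟨hcur, hch'⟩ := hch
    simp only [List.map_cons, List.nodup_cons] at hnd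
    have hW : applyF x L i s.1 = x i s.1 := by
      apply applyF_ne
      exact hnd.1
    rw [show applyF x (s :: L)
        = updA (applyF x L) s.1 (bSwap (fun i' => x i' s.1) s.2.1 s.2.2) from rfl]
    rw [sold_updA (applyF x L) s.1 (bSwap (fun i' => x i' s.1) s.2.1 s.2.2) i, hW,
      bSwap_castZ (y := fun i' => x i' s.1) (a := s.2.1) (c := s.2.2)
        (hga s ((List.mem_cons_self (a := s) (l := L)))) (hgt s ((List.mem_cons_self (a := s) (l := L)))) i,
      ih hch' hnd.2 (fun t ht => hga t (List.mem_cons_of_mem s ht))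
        (fun t ht => hgt t (List.mem_cons_of_mem s ht))]
    rw [hcur]
    ring

/-- the sold vector after a partner-side walk move -/
lemma sold_applyRev (x : Ω → N → ℕ) {L : List (Stp Ω N)} {i0 cur : Ω}
    (hch : Chn i0 L cur) (hnd : (L.map (·.1)).Nodup)
    (hga : ∀ s ∈ L, 1 ≤ x s.2.2 s.1) (hgt : ∀ s ∈ L, s.2.1 ≠ s.2.2) (i : Ω) :
    (sold (applyRev x L) i : ℤ)
      = sold x i + (if i = i0 then 1 else 0) - (if i = cur then 1 else 0) := by
  induction L generalizing cur with
  | nil =>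
    unfold Chn at hch
    subst hch
    simp [applyRev]
  | cons s L ih =>
    obtain ⟨hcur, hch'⟩ := hch
    simp only [List.map_cons, List.nodup_cons] at hnd
    have hW : applyRev x L i s.1 = x i s.1 := by
      apply applyRev_ne
      exact hnd.1
    rw [show applyRev x (s :: L)
        = updA (applyRev x L) s.1 (bSwap (fun i' => x i' s.1) s.2.2 s.2.1) from rfl]
    rw [sold_updA (applyRev x L) s.1 (bSwap (fun i' => x i' s.1) s.2.2 s.2.1) i, hW,
      bSwap_castZ (y := fun i' => x i' s.1) (a := s.2.2) (c := s.2.1)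
        (hga s ((List.mem_cons_self (a := s) (l := L)))) (Ne.symm (hgt s ((List.mem_cons_self (a := s) (l := L))))) i,
      ih hch' hnd.2 (fun t ht => hga t (List.mem_cons_of_mem s ht))
        (fun t ht => hgt t (List.mem_cons_of_mem s ht))]
    rw [hcur]
    ring

end MCP

namespace MCP

open Classical

variable {Ω N : Type*} [Fintype Ω] [Fintype N] [DecidableEq Ω] [DecidableEq N]
variable {b : Ω → ℕ} {d : N → ℕ} {v : Ω → N → ℕ} {p : Ω → ℝ}

lemma walk_InD_F {x x'' : Ω → N → ℕ} (hx : Stable b d v p x) (hx'' : Stable b d v p x'')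
    {j : N} {a c : Ω} (hf1 : x'' a j < x a j) (hf2 : x c j < x'' c j) :
    mg v p a j = mg v p c j ∧ InD b d v p j (bSwap (fun i => x i j) a c) :=
  swap_demanded (hx.2 j) (hx''.2 j) hf2 hf1

lemma walk_InD_R {x x'' : Ω → N → ℕ} (hx : Stable b d v p x) (hx'' : Stable b d v p x'')
    {j : N} {a c : Ω} (hf1 : x'' a j < x a j) (hf2 : x c j < x'' c j) :
    mg v p c j = mg v p a j ∧ InD b d v p j (bSwap (fun i => x'' i j) c a) :=
  swap_demanded (hx''.2 j) (hx.2 j) hf1 hf2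

lemma stable_applyF {x : Ω → N → ℕ} {L : List (Stp Ω N)} (hx : Stable b d v p x)
    (hnd : (L.map (·.1)).Nodup)
    (hD : ∀ s ∈ L, InD b d v p s.1 (bSwap (fun i => x i s.1) s.2.1 s.2.2))
    (hfeas : ∀ i, sold (applyF x L) i ≤ b i) : Stable b d v p (applyF x L) := by
  have hbund : ∀ j, InD b d v p j (fun i => applyF x L i j) := by
    intro j
    by_cases hj : j ∈ L.map (·.1)
    · obtain ⟨s, hs, hsj⟩ := List.mem_map.mp hj
      subst hsj
      have he : (fun i => applyF x L i s.1) = bSwap (fun i => x i s.1) s.2.1 s.2.2 := by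
        funext i; exact applyF_mem x hnd hs i
      rw [he]
      exact hD s hs
    · have he : (fun i => applyF x L i j) = fun i => x i j := by
        funext i; exact applyF_ne x hj i
      rw [he]
      exact hx.2 j
  exact ⟨⟨hfeas, fun j => (hbund j).1.2⟩, hbund⟩

lemma stable_applyRev {x'' : Ω → N → ℕ} {L : List (Stp Ω N)} (hx'' : Stable b d v p x'')
    (hnd : (L.map (·.1)).Nodup)
    (hD : ∀ s ∈ L, InD b d v p s.1 (bSwap (fun i => x'' i s.1) s.2.2 s.2.1))
    (hfeas : ∀ i, sold (applyRev x'' L) i ≤ b i) : Stable b d v p (applyRev x'' L) := by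
  have hbund : ∀ j, InD b d v p j (fun i => applyRev x'' L i j) := by
    intro j
    by_cases hj : j ∈ L.map (·.1)
    · obtain ⟨s, hs, hsj⟩ := List.mem_map.mp hj
      subst hsj
      have he : (fun i => applyRev x'' L i s.1) = bSwap (fun i => x'' i s.1) s.2.2 s.2.1 := by
        funext i; exact applyRev_mem x'' hnd hs i
      rw [he]
      exact hD s hs
    · have he : (fun i => applyRev x'' L i j) = fun i => x'' i j := by
        funext i; exact applyRev_ne x'' hj i
      rw [he]
      exact hx''.2 j
  exact ⟨⟨hfeas, fun j => (hbund j).1.2⟩, hbund⟩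

/-- total ℓ¹ distance between allocations -/
def distA (x w : Ω → N → ℕ) : ℕ := ∑ j, ∑ i, ((x i j : ℤ) - w i j).natAbs

lemma distA_updA (x W : Ω → N → ℕ) (j : N) (y' : Ω → ℕ) :
    distA x (updA W j y') + (∑ i, ((x i j : ℤ) - W i j).natAbs)
      = distA x W + ∑ i, ((x i j : ℤ) - y' i).natAbs := by
  unfold distA
  have key : ∀ j', (∑ i, ((x i j' : ℤ) - updA W j y' i j').natAbs)
      = if j' = j then (∑ i, ((x i j' : ℤ) - y' i).natAbs)
        else ∑ i, ((x i j' : ℤ) - W i j').natAbs := by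
    intro j'
    by_cases h : j' = j
    · subst h; simp [updA]
    · simp [updA, h]
  rw [Finset.sum_congr rfl fun j' _ => key j']
  rw [← Finset.sum_erase_add _ _ (Finset.mem_univ j),
    ← Finset.sum_erase_add (f := fun j' => ∑ i, ((x i j' : ℤ) - W i j').natAbs) _
      (Finset.mem_univ j)]
  have he : ∑ j' ∈ Finset.univ.erase j,
      (if j' = j then (∑ i, ((x i j' : ℤ) - y' i).natAbs)
        else ∑ i, ((x i j' : ℤ) - W i j').natAbs)
      = ∑ j' ∈ Finset.univ.erase j, ∑ i, ((x i j' : ℤ) - W i j').natAbs := by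
    apply Finset.sum_congr rfl
    intro j' hj'
    rw [if_neg (Finset.ne_of_mem_erase hj')]
  rw [he]
  simp only [eq_self_iff_true, if_true]
  omega

lemma dist_applyRev {x x'' : Ω → N → ℕ} {L : List (Stp Ω N)}
    (hnd : (L.map (·.1)).Nodup)
    (hf1 : ∀ s ∈ L, x'' s.2.1 s.1 < x s.2.1 s.1)
    (hf2 : ∀ s ∈ L, x s.2.2 s.1 < x'' s.2.2 s.1) :
    distA x (applyRev x'' L) + 2 * L.length = distA x x'' := by
  induction L with
  | nil => simp [applyRev]
  | cons s L ih =>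
    simp only [List.map_cons, List.nodup_cons] at hnd
    have hfr : applyRev x'' L s.2.2 s.1 = x'' s.2.2 s.1 := applyRev_ne x'' hnd.1 _
    rw [show applyRev x'' (s :: L)
        = updA (applyRev x'' L) s.1 (bSwap (fun i => x'' i s.1) s.2.2 s.2.1) from rfl]
    have h1 := distA_updA x (applyRev x'' L) s.1 (bSwap (fun i => x'' i s.1) s.2.2 s.2.1)
    have h2 : applyRev x'' L = fun i j => applyRev x'' L i j := rfl
    have hWj : ∀ i, applyRev x'' L i s.1 = x'' i s.1 := applyRev_ne x'' hnd.1
    have h3 : (∑ i, ((x i s.1 : ℤ) - applyRev x'' L i s.1).natAbs)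
        = ∑ i, ((x i s.1 : ℤ) - x'' i s.1).natAbs := by
      apply Finset.sum_congr rfl
      intro i _
      rw [hWj i]
    have h4 := norm_swap (z := fun i => x i s.1) (y := fun i => x'' i s.1)
      (g := s.2.2) (t := s.2.1) (hf2 s ((List.mem_cons_self (a := s) (l := L))))
      (hf1 s ((List.mem_cons_self (a := s) (l := L))))
      (by
        intro h
        have := hf1 s ((List.mem_cons_self (a := s) (l := L)))
        have := hf2 s ((List.mem_cons_self (a := s) (l := L)))
        rw [h] at *
        omega)
    have h5 := ih hnd.2 (fun t ht => hf1 t (List.mem_cons_of_mem s ht))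
      (fun t ht => hf2 t (List.mem_cons_of_mem s ht))
    rw [h3] at h1
    have h4' : (∑ i, ((x i s.1 : ℤ) - (bSwap (fun i => x'' i s.1) s.2.2 s.2.1 i : ℕ)).natAbs) + 2
        = ∑ i, ((x i s.1 : ℤ) - (x'' i s.1 : ℕ)).natAbs := h4
    simp only [List.length_cons]
    omega

lemma chn_cur_mem {i0 cur : Ω} {L : List (Stp Ω N)} (hch : Chn i0 L cur) :
    cur = i0 ∨ cur ∈ L.map (·.2.2) := by
  cases L with
  | nil => exact Or.inl hch
  | cons s L => exact Or.inr (by rw [← hch.1]; exact List.mem_map_of_mem (List.mem_cons_self (a := s) (l := L)))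

lemma chn_append {P Q : List (Stp Ω N)} {i0 cur : Ω} (h : Chn i0 (P ++ Q) cur) :
    ∃ mid, Chn mid P cur ∧ Chn i0 Q mid := by
  induction P generalizing cur with
  | nil => exact ⟨cur, rfl, h⟩
  | cons s P ih =>
    obtain ⟨h1, h2⟩ := h
    obtain ⟨mid, hm1, hm2⟩ := ih h2
    exact ⟨mid, ⟨h1, hm1⟩, hm2⟩

lemma chn_gives {i0 cur : Ω} {L : List (Stp Ω N)} (hch : Chn i0 L cur) :
    ∀ s ∈ L, s.2.1 = i0 ∨ s.2.1 ∈ L.map (·.2.2) := by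
  induction L generalizing cur with
  | nil => intro s hs; cases hs
  | cons t L ih =>
    intro s hs
    have hsub : ∀ u : Ω, u ∈ L.map (·.2.2) → u ∈ (t :: L).map (·.2.2) := by
      intro u hu
      rw [List.map_cons]
      exact List.mem_cons_of_mem _ hu
    rcases List.mem_cons.mp hs with h | h
    · rw [h]
      rcases chn_cur_mem hch.2 with h' | h'
      · exact Or.inl h'
      · exact Or.inr (hsub _ h')
    · rcases ih hch.2 s h with h' | h'
      · exact Or.inl h'
      · exact Or.inr (hsub _ h')

lemma chn_give_ne_take {i0 cur : Ω} {L : List (Stp Ω N)} (hch : Chn i0 L cur)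
    (hnd : (i0 :: L.map (·.2.2)).Nodup) : ∀ s ∈ L, s.2.1 ≠ s.2.2 := by
  induction L generalizing cur with
  | nil => intro s hs; cases hs
  | cons t L ih =>
    have hnd' : (i0 :: L.map (·.2.2)).Nodup := by
      simp only [List.map_cons, List.nodup_cons] at hnd ⊢
      refine ⟨fun h => hnd.1 (List.mem_cons_of_mem _ h), hnd.2.2⟩
    intro s hs
    have hi0 : i0 ∉ ((t :: L).map (·.2.2)) := by
      simp only [List.nodup_cons] at hnd
      exact hnd.1
    have htk : t.2.2 ∉ L.map (·.2.2) := by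
      simp only [List.map_cons, List.nodup_cons] at hnd
      exact hnd.2.1
    have hhead : t.2.1 ≠ t.2.2 := by
      intro he
      rcases chn_cur_mem hch.2 with h' | h'
      · apply hi0
        have he2 : t.2.2 = i0 := he ▸ h'
        rw [List.map_cons, he2]
        exact List.mem_cons_self
      · exact htk (he ▸ h')
    rcases List.mem_cons.mp hs with h | h
    · rw [h]; exact hhead
    · exact ih hch.2 hnd' s h

end MCP

namespace MCP

open Classical

variable {Ω N : Type*} [Fintype Ω] [Fintype N] [DecidableEq Ω] [DecidableEq N]
variable {b : Ω → ℕ} {d : N → ℕ} {v : Ω → N → ℕ} {p : Ω → ℝ}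

lemma Phi_congr {x' x'' : Ω → N → ℕ} (h : ∀ i, sold x' i = sold x'' i) :
    Phi b p x' = Phi b p x'' := by
  unfold Phi Pval Tval
  rw [Finset.sum_congr rfl fun i _ => h i, Finset.sum_congr rfl fun i _ => h i]

/-- pushing a cycle onto the partner allocation contradicts its distance-minimality -/
lemma cycle_contra {x x'' : Ω → N → ℕ}
    (hxS : Stable b d v p x) (hx''S : SStar b d v p x'') {i0 : Ω}
    (hslack'' : sold x'' i0 < b i0)
    (hmind : ∀ w, SStar b d v p w → sold w i0 < b i0 → distA x x'' ≤ distA x w)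
    {CL : List (Stp Ω N)} {β : Ω} (hCLne : CL ≠ [])
    (hch : Chn β CL β) (hndb : (CL.map (·.1)).Nodup)
    (hf1 : ∀ s ∈ CL, x'' s.2.1 s.1 < x s.2.1 s.1)
    (hf2 : ∀ s ∈ CL, x s.2.2 s.1 < x'' s.2.2 s.1)
    (hgt : ∀ s ∈ CL, s.2.1 ≠ s.2.2) : False := by
  have hga : ∀ s ∈ CL, 1 ≤ x'' s.2.2 s.1 := by
    intro s hs
    have := hf2 s hs
    omega
  have hsold : ∀ i, sold (applyRev x'' CL) i = sold x'' i := by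
    intro i
    have hz := sold_applyRev x'' hch hndb hga hgt i
    by_cases h : i = β
    · rw [h] at hz ⊢
      simp only [eq_self_iff_true, if_true] at hz
      omega
    · rw [if_neg h] at hz
      omega
  have hfeas : ∀ i, sold (applyRev x'' CL) i ≤ b i := by
    intro i
    rw [hsold i]
    exact hx''S.1.1.1 i
  have hst : Stable b d v p (applyRev x'' CL) := by
    apply stable_applyRev hx''S.1 hndb _ hfeas
    intro s hs
    exact (walk_InD_R hxS hx''S.1 (hf1 s hs) (hf2 s hs)).2
  have hS : SStar b d v p (applyRev x'' CL) := ⟨hst, by rw [Phi_congr hsold]; exact hx''S.2⟩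
  have hsl : sold (applyRev x'' CL) i0 < b i0 := by rw [hsold]; exact hslack''
  have hd := dist_applyRev (x := x) (x'' := x'') hndb hf1 hf2
  have hmd := hmind _ hS hsl
  have hlen : 1 ≤ CL.length := by
    cases CL with
    | nil => exact absurd rfl hCLne
    | cons s L => simp
  omega

lemma feas_delta_R {b : Ω → ℕ} {x' xb : Ω → N → ℕ} {e f : Ω}
    (h : ∀ i, (sold x' i : ℤ) = sold xb i + (if i = e then 1 else 0) - (if i = f then 1 else 0))
    (hb : ∀ i, sold xb i ≤ b i) (he : sold xb e < b e ∨ e = f) : ∀ i, sold x' i ≤ b i := by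
  intro i
  have hzz := h i
  have hb2 := hb i
  by_cases h1 : i = e
  · by_cases h2 : i = f
    · rw [if_pos h1, if_pos h2] at hzz; omega
    · rw [if_pos h1, if_neg h2] at hzz
      rcases he with he | he
      · rw [h1] at hzz hb2 ⊢
        omega
      · exact absurd (h1.trans he) h2
  · rw [if_neg h1] at hzz
    by_cases h2 : i = f
    · rw [if_pos h2] at hzz; omega
    · rw [if_neg h2] at hzz; omega

lemma feas_delta_F {b : Ω → ℕ} {x' xb : Ω → N → ℕ} {e f : Ω}
    (h : ∀ i, (sold x' i : ℤ) = sold xb i - (if i = e then 1 else 0) + (if i = f then 1 else 0))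
    (hb : ∀ i, sold xb i ≤ b i) (hf : sold xb f < b f ∨ f = e) : ∀ i, sold x' i ≤ b i := by
  intro i
  have hzz := h i
  have hb2 := hb i
  by_cases h2 : i = f
  · by_cases h1 : i = e
    · rw [if_pos h1, if_pos h2] at hzz; omega
    · rw [if_neg h1, if_pos h2] at hzz
      rcases hf with hf | hf
      · rw [h2] at hzz hb2 ⊢
        omega
      · exact absurd (h2.trans hf) h1
  · rw [if_neg h2] at hzz
    by_cases h1 : i = e
    · rw [if_pos h1] at hzz; omega
    · rw [if_neg h1] at hzz; omega

lemma sumS_delta_F {x' x : Ω → N → ℕ} {e f : Ω}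
    (h : ∀ i, (sold x' i : ℤ) = sold x i - (if i = e then 1 else 0) + (if i = f then 1 else 0))
    (S : Finset Ω) :
    (∑ i ∈ S, (sold x' i : ℤ))
      = ∑ i ∈ S, (sold x i : ℤ) - (if e ∈ S then 1 else 0) + (if f ∈ S then 1 else 0) := by
  rw [Finset.sum_congr rfl fun i _ => h i]
  rw [Finset.sum_add_distrib, Finset.sum_sub_distrib]
  rw [Finset.sum_ite_eq' S e fun _ => (1 : ℤ), Finset.sum_ite_eq' S f fun _ => (1 : ℤ)]

lemma Phi_delta_F {b : Ω → ℕ} {x' x : Ω → N → ℕ} {e f : Ω}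
    (h : ∀ i, (sold x' i : ℤ) = sold x i - (if i = e then 1 else 0) + (if i = f then 1 else 0)) :
    (Phi b p x' : ℤ) = Phi b p x
      + (Kc b : ℤ) * ((if 0 < p f then 1 else 0) - (if 0 < p e then 1 else 0)) := by
  unfold Phi Pval Tval
  have h1 := sumS_delta_F h (Finset.univ.filter (fun i => 0 < p i))
  have h2 := sumS_delta_F h Finset.univ
  push_cast
  rw [h1, h2]
  simp only [Finset.mem_filter, Finset.mem_univ, true_and, if_true]
  ring

end MCP

namespace MCP

open Classical

variable {Ω N : Type*} [Fintype Ω] [Fintype N] [DecidableEq Ω] [DecidableEq N]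
variable {b : Ω → ℕ} {d : N → ℕ} {v : Ω → N → ℕ} {p : Ω → ℝ}

lemma walk_aux {x x'' : Ω → N → ℕ} (hxS : SStar b d v p x) (hx''S : SStar b d v p x'')
    {i0 : Ω} (hi0A : i0 ∈ Af b d v p) (hfull : sold x i0 = b i0)
    (hslack'' : sold x'' i0 < b i0)
    (hmind : ∀ w, SStar b d v p w → sold w i0 < b i0 → distA x x'' ≤ distA x w) :
    ∀ (fuel : ℕ) (L : List (Stp Ω N)) (cur : Ω),
      Fintype.card N ≤ L.length + fuel →
      Chn i0 L cur →
      (L.map (·.1)).Nodup →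
      (i0 :: L.map (·.2.2)).Nodup →
      (∀ s ∈ L, x'' s.2.1 s.1 < x s.2.1 s.1) →
      (∀ s ∈ L, x s.2.2 s.1 < x'' s.2.2 s.1) →
      (∀ s ∈ L, sold x s.2.2 = b s.2.2) →
      ∃ xt, SStar b d v p xt ∧ sold xt i0 < b i0 ∧ ∀ j,
        (∀ i, xt i j = x i j) ∨
        ∃ a c, a ∈ Af b d v p ∧ c ∈ Af b d v p ∧ c ≠ i0 ∧ a ≠ c ∧
          mg v p a j = mg v p c j ∧ 1 ≤ x a j ∧ x c j < b c ∧
          ∀ i, xt i j = bSwap (fun i' => x i' j) a c i := by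
  intro fuel
  induction fuel using Nat.strong_induction_on with
  | _ fuel IH =>
  intro L cur hcard hch hndb hndo hf1 hf2 hfullL
  have hi0pos : 0 < p i0 := (mem_Af.mp hi0A).1
  have hKc : 1 ≤ Kc b := by unfold Kc; omega
  have hgtL : ∀ s ∈ L, s.2.1 ≠ s.2.2 := chn_give_ne_take hch hndo
  have hgaR : ∀ s ∈ L, 1 ≤ x'' s.2.2 s.1 := fun s hs => by have := hf2 s hs; omega
  have hgaF : ∀ s ∈ L, 1 ≤ x s.2.1 s.1 := fun s hs => by have := hf1 s hs; omega
  -- the current object is full in x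
  have hcurfull : sold x cur = b cur := by
    rcases chn_cur_mem hch with h | h
    · rw [h]; exact hfull
    · obtain ⟨s, hs, hseq⟩ := List.mem_map.mp h
      rw [← hseq]; exact hfullL s hs
  -- find a buyer holding more of `cur` in x than in x''
  have hexj' : ∃ j', x'' cur j' < x cur j' := by
    cases L with
    | nil =>
      have hcur : cur = i0 := hch
      apply exists_gt_coord (f := fun j => x'' cur j) (g := fun j => x cur j)
      show sold x'' cur < sold x cur
      rw [hcur]
      omega
    | cons s L' =>
      apply exists_lt_coord2 (f := fun j => x'' cur j) (g := fun j => x cur j)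
        (j0 := s.1)
      · show sold x'' cur ≤ sold x cur
        rw [hcurfull]
        exact hx''S.1.1.1 cur
      · show x cur s.1 < x'' cur s.1
        rw [← hch.1]
        exact hf2 s (List.mem_cons_self)
  obtain ⟨j', hj'c⟩ := hexj'
  by_cases hj'L : j' ∈ L.map (·.1)
  · -- buyer already on the walk : push the cycle onto x''
    obtain ⟨s0, hs0L, hs0j⟩ := List.mem_map.mp hj'L
    obtain ⟨P, rest, hPL⟩ := List.append_of_mem hs0L
    have hchP : Chn s0.2.2 P cur := by
      rw [hPL] at hch
      obtain ⟨mid, h1, h2⟩ := chn_append hch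
      rw [h2.1]
      exact h1
    have memP : ∀ s ∈ P, s ∈ L := by
      intro s hs; rw [hPL]; exact List.mem_append_left _ hs
    have hchCL : Chn s0.2.2 ((j', cur, s0.2.2) :: P) s0.2.2 := ⟨rfl, hchP⟩
    have hj'P : j' ∉ P.map (·.1) := by
      intro hmem
      have hmapL : (L.map (·.1)) = P.map (·.1) ++ s0.1 :: rest.map (·.1) := by
        rw [hPL]; simp
      have hndbL := hndb
      rw [hmapL] at hndbL
      rcases List.nodup_append'.mp hndbL with ⟨-, -, hdisj⟩
      exact hdisj hmem (by rw [← hs0j]; exact List.mem_cons_self)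
    have hndP : (P.map (·.1)).Nodup := by
      have hmapL : (L.map (·.1)) = P.map (·.1) ++ s0.1 :: rest.map (·.1) := by
        rw [hPL]; simp
      have hndbL := hndb
      rw [hmapL] at hndbL
      exact (List.nodup_append.mp hndbL).1
    have hndbCL : (((j', cur, s0.2.2) :: P).map (·.1)).Nodup := by
      simp only [List.map_cons]
      exact List.nodup_cons.mpr ⟨hj'P, hndP⟩
    have hf2s0 : x s0.2.2 j' < x'' s0.2.2 j' := by
      rw [← hs0j]; exact hf2 s0 hs0L
    have hf1CL : ∀ s ∈ (j', cur, s0.2.2) :: P, x'' s.2.1 s.1 < x s.2.1 s.1 := by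
      intro s hs
      rcases List.mem_cons.mp hs with h | h
      · rw [h]; exact hj'c
      · exact hf1 s (memP s h)
    have hf2CL : ∀ s ∈ (j', cur, s0.2.2) :: P, x s.2.2 s.1 < x'' s.2.2 s.1 := by
      intro s hs
      rcases List.mem_cons.mp hs with h | h
      · rw [h]; exact hf2s0
      · exact hf2 s (memP s h)
    have hgtCL : ∀ s ∈ (j', cur, s0.2.2) :: P, s.2.1 ≠ s.2.2 := by
      intro s hs
      rcases List.mem_cons.mp hs with h | h
      · rw [h]
        intro he
        simp only at he
        rw [he] at hj'c
        omega
      · exact hgtL s (memP s h)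
    exact (cycle_contra hxS.1 hx''S hslack'' hmind (List.cons_ne_nil _ _)
      hchCL hndbCL hf1CL hf2CL hgtCL).elim
  · -- j' is fresh
    by_cases hrow : ∑ i, x'' i j' < ∑ i, x i j'
    · -- END-B : partner can absorb a unit, Φ contradiction
      obtain ⟨hm0, haD⟩ := transfer_demanded (hxS.1.2 j') (hx''S.1.2 j') hrow hj'c
      -- push the reversed path onto x'' and add a unit of cur to j'
      have hsoldWR := fun i => sold_applyRev x'' hch hndb hgaR hgtL i
      have hfeasWR : ∀ i, sold (applyRev x'' L) i ≤ b i :=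
        feas_delta_R hsoldWR (hx''S.1.1.1) (Or.inl hslack'')
      have hstWR : Stable b d v p (applyRev x'' L) := by
        apply stable_applyRev hx''S.1 hndb _ hfeasWR
        intro s hs
        exact (walk_InD_R hxS.1 hx''S.1 (hf1 s hs) (hf2 s hs)).2
      have hWRj' : ∀ i, applyRev x'' L i j' = x'' i j' := applyRev_ne x'' hj'L
      have hΔ : ∀ i, (sold (updA (applyRev x'' L) j' (bAdd (fun i' => x'' i' j') cur)) i : ℤ)
          = sold x'' i + (if i = i0 then 1 else 0) := by
        intro i
        rw [sold_updA]
        rw [hWRj' i]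
        have hzz := hsoldWR i
        unfold bAdd
        by_cases h2 : i = cur
        · rw [if_pos h2] at hzz
          rw [if_pos h2]
          by_cases h1 : i = i0
          · rw [if_pos h1] at hzz ⊢
            push_cast
            omega
          · rw [if_neg h1] at hzz ⊢
            push_cast
            omega
        · rw [if_neg h2] at hzz
          rw [if_neg h2]
          by_cases h1 : i = i0
          · rw [if_pos h1] at hzz ⊢
            push_cast
            omega
          · rw [if_neg h1] at hzz ⊢
            push_cast
            omega
      have hfeas3 : ∀ i, sold (updA (applyRev x'' L) j' (bAdd (fun i' => x'' i' j') cur)) i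
          ≤ b i := by
        intro i
        have hzz := hΔ i
        have hb2 : sold x'' i ≤ b i := hx''S.1.1.1 i
        by_cases h1 : i = i0
        · rw [if_pos h1] at hzz
          rw [h1] at hzz hb2 ⊢
          omega
        · rw [if_neg h1] at hzz; omega
      have hst3 : Stable b d v p (updA (applyRev x'' L) j' (bAdd (fun i' => x'' i' j') cur)) := by
        apply stable_updA hstWR _ hfeas3
        have : (fun i => applyRev x'' L i j') = fun i => x'' i j' := funext hWRj'
        unfold InD
        rw [show (fun i' => x'' i' j') = fun i => x'' i j' from rfl] at haD
        exact haD
      have hP := Phi_delta_add (b := b) (p := p) hΔ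
      rw [if_pos hi0pos] at hP
      have hle := Phi_le_Gv hst3
      have hxG := hx''S.2
      omega
    · -- take-edge exists
      push_neg at hrow
      obtain ⟨bnew, hbnew⟩ := exists_lt_coord2 (f := fun i => x i j') (g := fun i => x'' i j')
        hrow hj'c
      have hcurbnew : cur ≠ bnew := by
        intro h; rw [h] at hj'c; omega
      by_cases hbL : bnew = i0 ∨ bnew ∈ L.map (·.2.2)
      · -- object cycle
        have hobj : ∃ P : List (Stp Ω N), Chn bnew P cur ∧ (∀ s ∈ P, s ∈ L)
            ∧ (P.map (·.1)).Nodup := by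
          rcases hbL with h | h
          · exact ⟨L, h ▸ hch, fun s hs => hs, hndb⟩
          · obtain ⟨s0, hs0L, hs0e⟩ := List.mem_map.mp h
            obtain ⟨P, rest, hPL⟩ := List.append_of_mem hs0L
            refine ⟨P, ?_, ?_, ?_⟩
            · rw [hPL] at hch
              obtain ⟨mid, h1, h2⟩ := chn_append hch
              rw [← hs0e, h2.1]
              exact h1
            · intro s hs; rw [hPL]; exact List.mem_append_left _ hs
            · have hmapL : (L.map (·.1)) = P.map (·.1) ++ s0.1 :: rest.map (·.1) := by
                rw [hPL]; simp
              have hndbL := hndb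
              rw [hmapL] at hndbL
              exact (List.nodup_append.mp hndbL).1
        obtain ⟨P, hchP, memP, hndP⟩ := hobj
        have hj'P : j' ∉ P.map (·.1) := by
          intro hmem
          obtain ⟨s, hs, hse⟩ := List.mem_map.mp hmem
          exact hj'L (List.mem_map.mpr ⟨s, memP s hs, hse⟩)
        have hchCL : Chn bnew ((j', cur, bnew) :: P) bnew := ⟨rfl, hchP⟩
        have hndbCL : (((j', cur, bnew) :: P).map (·.1)).Nodup := by
          simp only [List.map_cons]
          exact List.nodup_cons.mpr ⟨hj'P, hndP⟩
        have hf1CL : ∀ s ∈ (j', cur, bnew) :: P, x'' s.2.1 s.1 < x s.2.1 s.1 := by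
          intro s hs
          rcases List.mem_cons.mp hs with h | h
          · rw [h]; exact hj'c
          · exact hf1 s (memP s h)
        have hf2CL : ∀ s ∈ (j', cur, bnew) :: P, x s.2.2 s.1 < x'' s.2.2 s.1 := by
          intro s hs
          rcases List.mem_cons.mp hs with h | h
          · rw [h]; exact hbnew
          · exact hf2 s (memP s h)
        have hgtCL : ∀ s ∈ (j', cur, bnew) :: P, s.2.1 ≠ s.2.2 := by
          intro s hs
          rcases List.mem_cons.mp hs with h | h
          · rw [h]; exact hcurbnew
          · exact hgtL s (memP s h)
        exact (cycle_contra hxS.1 hx''S hslack'' hmind (List.cons_ne_nil _ _)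
          hchCL hndbCL hf1CL hf2CL hgtCL).elim
      · -- fresh object
        push_neg at hbL
        obtain ⟨hbne0, hbnotin⟩ := hbL
        -- extended walk data
        have hchLf : Chn i0 ((j', cur, bnew) :: L) bnew := ⟨rfl, hch⟩
        have hndbLf : (((j', cur, bnew) :: L).map (·.1)).Nodup := by
          simp only [List.map_cons]
          exact List.nodup_cons.mpr ⟨hj'L, hndb⟩
        have hndoLf : (i0 :: ((j', cur, bnew) :: L).map (·.2.2)).Nodup := by
          simp only [List.map_cons]
          rcases List.nodup_cons.mp hndo with ⟨hi0n, hmn⟩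
          refine List.nodup_cons.mpr ⟨?_, List.nodup_cons.mpr ⟨hbnotin, hmn⟩⟩
          intro hmem
          rcases List.mem_cons.mp hmem with h | h
          · exact hbne0 h.symm
          · exact hi0n h
        have hf1Lf : ∀ s ∈ (j', cur, bnew) :: L, x'' s.2.1 s.1 < x s.2.1 s.1 := by
          intro s hs
          rcases List.mem_cons.mp hs with h | h
          · rw [h]; exact hj'c
          · exact hf1 s h
        have hf2Lf : ∀ s ∈ (j', cur, bnew) :: L, x s.2.2 s.1 < x'' s.2.2 s.1 := by
          intro s hs
          rcases List.mem_cons.mp hs with h | h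
          · rw [h]; exact hbnew
          · exact hf2 s h
        have hgtLf : ∀ s ∈ (j', cur, bnew) :: L, s.2.1 ≠ s.2.2 :=
          chn_give_ne_take hchLf hndoLf
        have hgaRLf : ∀ s ∈ (j', cur, bnew) :: L, 1 ≤ x'' s.2.2 s.1 :=
          fun s hs => by have := hf2Lf s hs; omega
        have hgaFLf : ∀ s ∈ (j', cur, bnew) :: L, 1 ≤ x s.2.1 s.1 :=
          fun s hs => by have := hf1Lf s hs; omega
        by_cases hbslack : sold x bnew < b bnew
        · -- GOOD END (or Φ-contradiction)
          -- partner-side push shows bnew is positively priced and in Af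
          have hsoldWR := fun i => sold_applyRev x'' hchLf hndbLf hgaRLf hgtLf i
          have hfeasWR : ∀ i, sold (applyRev x'' ((j', cur, bnew) :: L)) i ≤ b i :=
            feas_delta_R hsoldWR (hx''S.1.1.1) (Or.inl hslack'')
          have hstWR : Stable b d v p (applyRev x'' ((j', cur, bnew) :: L)) := by
            apply stable_applyRev hx''S.1 hndbLf _ hfeasWR
            intro s hs
            exact (walk_InD_R hxS.1 hx''S.1 (hf1Lf s hs) (hf2Lf s hs)).2
          have hPWR := Phi_delta (b := b) (p := p) (e := i0) (f := bnew) hsoldWR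
          rw [if_pos hi0pos] at hPWR
          have hbpos : 0 < p bnew := by
            by_contra hneg
            rw [if_neg hneg] at hPWR
            have hle := Phi_le_Gv hstWR
            have hxG := hx''S.2
            omega
          rw [if_pos hbpos] at hPWR
          have hSWR : SStar b d v p (applyRev x'' ((j', cur, bnew) :: L)) := by
            refine ⟨hstWR, ?_⟩
            have hxG := hx''S.2
            omega
          have hbAf : bnew ∈ Af b d v p := by
            apply mem_Af.mpr
            refine ⟨hbpos, applyRev x'' ((j', cur, bnew) :: L), hSWR, ?_⟩
            have hzz := hsoldWR bnew
            rw [if_neg hbne0, if_pos rfl] at hzz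
            have hb2 : sold x'' bnew ≤ b bnew := hx''S.1.1.1 bnew
            have hb3 : 1 ≤ x'' bnew j' := by omega
            have hb4 : x'' bnew j' ≤ sold x'' bnew := coord_le_sold x'' bnew j'
            omega
          -- all take-objects of L are in Af
          have hAf_take : ∀ s ∈ L, s.2.2 ∈ Af b d v p := by
            intro s hsL
            obtain ⟨P, rest, hPL⟩ := List.append_of_mem hsL
            have hchP : Chn s.2.2 P cur := by
              rw [hPL] at hch
              obtain ⟨mid, h1, h2⟩ := chn_append hch
              rw [h2.1]
              exact h1
            have memP : ∀ t ∈ P, t ∈ L := by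
              intro t ht; rw [hPL]; exact List.mem_append_left _ ht
            have hndP : (P.map (·.1)).Nodup := by
              have hmapL : (L.map (·.1)) = P.map (·.1) ++ s.1 :: rest.map (·.1) := by
                rw [hPL]; simp
              have hndbL := hndb
              rw [hmapL] at hndbL
              exact (List.nodup_append.mp hndbL).1
            have hj'P : j' ∉ P.map (·.1) := by
              intro hmem
              obtain ⟨t, ht, hte⟩ := List.mem_map.mp hmem
              exact hj'L (List.mem_map.mpr ⟨t, memP t ht, hte⟩)
            have hchPf : Chn s.2.2 ((j', cur, bnew) :: P) bnew := ⟨rfl, hchP⟩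
            have hndbPf : (((j', cur, bnew) :: P).map (·.1)).Nodup := by
              simp only [List.map_cons]
              exact List.nodup_cons.mpr ⟨hj'P, hndP⟩
            have hf1Pf : ∀ t ∈ (j', cur, bnew) :: P, x'' t.2.1 t.1 < x t.2.1 t.1 := by
              intro t ht
              rcases List.mem_cons.mp ht with h | h
              · rw [h]; exact hj'c
              · exact hf1 t (memP t h)
            have hf2Pf : ∀ t ∈ (j', cur, bnew) :: P, x t.2.2 t.1 < x'' t.2.2 t.1 := by
              intro t ht
              rcases List.mem_cons.mp ht with h | h
              · rw [h]; exact hbnew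
              · exact hf2 t (memP t h)
            have hgtPf : ∀ t ∈ (j', cur, bnew) :: P, t.2.1 ≠ t.2.2 := by
              intro t ht
              rcases List.mem_cons.mp ht with h | h
              · rw [h]; exact hcurbnew
              · exact hgtL t (memP t h)
            have hgaPf : ∀ t ∈ (j', cur, bnew) :: P, 1 ≤ x t.2.1 t.1 :=
              fun t ht => by have := hf1Pf t ht; omega
            have hsoldXS := fun i => sold_applyF x hchPf hndbPf hgaPf hgtPf i
            have hsne : s.2.2 ≠ bnew := by
              intro h
              exact hbnotin (h ▸ List.mem_map.mpr ⟨s, hsL, rfl⟩)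
            have hfeasXS : ∀ i, sold (applyF x ((j', cur, bnew) :: P)) i ≤ b i :=
              feas_delta_F hsoldXS (hxS.1.1.1) (Or.inl hbslack)
            have hstXS : Stable b d v p (applyF x ((j', cur, bnew) :: P)) := by
              apply stable_applyF hxS.1 hndbPf _ hfeasXS
              intro t ht
              exact (walk_InD_F hxS.1 hx''S.1 (hf1Pf t ht) (hf2Pf t ht)).2
            have hPXS := Phi_delta_F (b := b) (p := p) (e := s.2.2) (f := bnew) hsoldXS
            rw [if_pos hbpos] at hPXS
            have hspos : 0 < p s.2.2 := by
              by_contra hneg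
              rw [if_neg hneg] at hPXS
              have hle := Phi_le_Gv hstXS
              have hxG := hxS.2
              omega
            rw [if_pos hspos] at hPXS
            have hSXS : SStar b d v p (applyF x ((j', cur, bnew) :: P)) := by
              refine ⟨hstXS, ?_⟩
              have hxG := hxS.2
              omega
            apply mem_Af.mpr
            refine ⟨hspos, applyF x ((j', cur, bnew) :: P), hSXS, ?_⟩
            have hzz := hsoldXS s.2.2
            rw [if_pos rfl, if_neg hsne] at hzz
            have hfs : sold x s.2.2 = b s.2.2 := hfullL s hsL
            have hb3 : 1 ≤ x s.2.1 s.1 := hgaF s hsL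
            have hb5 : x s.2.2 s.1 < x'' s.2.2 s.1 := hf2 s hsL
            have hb6 : x'' s.2.2 s.1 ≤ sold x'' s.2.2 := coord_le_sold x'' s.2.2 s.1
            have hb7 : sold x'' s.2.2 ≤ b s.2.2 := hx''S.1.1.1 s.2.2
            omega
          -- now the good-end allocation
          have hsoldXT := fun i => sold_applyF x hchLf hndbLf hgaFLf hgtLf i
          have hfeasXT : ∀ i, sold (applyF x ((j', cur, bnew) :: L)) i ≤ b i :=
            feas_delta_F hsoldXT (hxS.1.1.1) (Or.inl hbslack)
          have hstXT : Stable b d v p (applyF x ((j', cur, bnew) :: L)) := by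
            apply stable_applyF hxS.1 hndbLf _ hfeasXT
            intro t ht
            exact (walk_InD_F hxS.1 hx''S.1 (hf1Lf t ht) (hf2Lf t ht)).2
          have hPXT := Phi_delta_F (b := b) (p := p) (e := i0) (f := bnew) hsoldXT
          rw [if_pos hbpos, if_pos hi0pos] at hPXT
          have hSXT : SStar b d v p (applyF x ((j', cur, bnew) :: L)) := by
            refine ⟨hstXT, ?_⟩
            have hxG := hxS.2
            omega
          have hslXT : sold (applyF x ((j', cur, bnew) :: L)) i0 < b i0 := by
            have hzz := hsoldXT i0
            rw [if_pos rfl, if_neg (fun h => hbne0 h.symm : ¬ i0 = bnew)] at hzz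
            omega
          refine ⟨applyF x ((j', cur, bnew) :: L), hSXT, hslXT, ?_⟩
          intro j
          by_cases hjL : j ∈ ((j', cur, bnew) :: L).map (·.1)
          · obtain ⟨s, hs, hsj⟩ := List.mem_map.mp hjL
            right
            refine ⟨s.2.1, s.2.2, ?_, ?_, ?_, ?_, ?_, ?_, ?_, ?_⟩
            · -- give-object in Af
              rcases chn_gives hchLf s hs with h | h
              · rw [h]; exact hi0A
              · obtain ⟨u, hu, hue⟩ := List.mem_map.mp h
                rcases List.mem_cons.mp hu with h' | h'
                · rw [← hue, h']; exact hbAf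
                · rw [← hue]; exact hAf_take u h'
            · -- take-object in Af
              rcases List.mem_cons.mp hs with h' | h'
              · rw [h']; exact hbAf
              · exact hAf_take s h'
            · -- take-object differs from i0
              intro he
              rcases List.nodup_cons.mp hndoLf with ⟨hi0n, -⟩
              exact hi0n (he ▸ List.mem_map.mpr ⟨s, hs, rfl⟩)
            · exact hgtLf s hs
            · rw [← hsj]
              exact (walk_InD_F hxS.1 hx''S.1 (hf1Lf s hs) (hf2Lf s hs)).1
            · rw [← hsj]; exact hgaFLf s hs
            · have h5 := hf2Lf s hs
              have h6 : x'' s.2.2 s.1 ≤ sold x'' s.2.2 := coord_le_sold x'' s.2.2 s.1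
              have h7 : sold x'' s.2.2 ≤ b s.2.2 := hx''S.1.1.1 s.2.2
              rw [← hsj]
              omega
            · intro i
              rw [← hsj]
              exact applyF_mem x hndbLf hs i
          · left
            intro i
            exact applyF_ne x hjL i
        · -- continue the walk
          have hbfull : sold x bnew = b bnew := le_antisymm (hxS.1.1.1 bnew) (not_lt.mp hbslack)
          have hfullLf : ∀ s ∈ (j', cur, bnew) :: L, sold x s.2.2 = b s.2.2 := by
            intro s hs
            rcases List.mem_cons.mp hs with h | h
            · rw [h]; exact hbfull
            · exact hfullL s h
          have hlenN : L.length + 1 ≤ Fintype.card N := by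
            have hnd2 : (j' :: L.map (·.1)).Nodup := List.nodup_cons.mpr ⟨hj'L, hndb⟩
            have := hnd2.length_le_card
            simpa using this
          have hfuel1 : 1 ≤ fuel := by omega
          have := IH (fuel - 1) (by omega) ((j', cur, bnew) :: L) bnew
            (by simp only [List.length_cons]; omega)
            hchLf hndbLf hndoLf hf1Lf hf2Lf hfullLf
          exact this

end MCP

namespace MCP

open Classical

variable {Ω N : Type*} [Fintype Ω] [Fintype N] [DecidableEq Ω] [DecidableEq N]
variable {b : Ω → ℕ} {d : N → ℕ} {v : Ω → N → ℕ} {p : Ω → ℝ}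

lemma norm_mixed1 {z y : Ω → ℕ} {a c : Ω} (ha : z a < y a) (hc : z c ≤ y c) (hac : a ≠ c) :
    (∑ i, ((z i : ℤ) - bSwap y a c i).natAbs) = ∑ i, ((z i : ℤ) - y i).natAbs := by
  have key : ∀ i, ((z i : ℤ) - bSwap y a c i).natAbs + (if i = a then 1 else 0)
      = ((z i : ℤ) - y i).natAbs + (if i = c then 1 else 0) := by
    intro i; unfold bSwap
    by_cases h1 : i = a
    · subst h1; simp only [if_pos rfl, if_neg hac, if_true, if_false]
      omega
    · by_cases h2 : i = c
      · subst h2; simp only [if_neg h1, if_pos rfl, if_false, if_true]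
        omega
      · simp [h1, h2]
  have h2 := Finset.sum_congr rfl (fun i (_ : i ∈ Finset.univ) => key i)
  rw [Finset.sum_add_distrib, Finset.sum_add_distrib,
    Finset.sum_ite_eq' Finset.univ a fun _ => 1,
    Finset.sum_ite_eq' Finset.univ c fun _ => 1] at h2
  simpa using h2

lemma norm_mixed2 {z y : Ω → ℕ} {a c : Ω} (ha : y a ≤ z a) (hc : y c < z c) (hac : a ≠ c)
    (hya : 1 ≤ y a) :
    (∑ i, ((z i : ℤ) - bSwap y a c i).natAbs) = ∑ i, ((z i : ℤ) - y i).natAbs := by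
  have key : ∀ i, ((z i : ℤ) - bSwap y a c i).natAbs + (if i = c then 1 else 0)
      = ((z i : ℤ) - y i).natAbs + (if i = a then 1 else 0) := by
    intro i; unfold bSwap
    by_cases h1 : i = a
    · subst h1; simp only [if_pos rfl, if_neg hac, if_true, if_false]
      omega
    · by_cases h2 : i = c
      · subst h2; simp only [if_neg h1, if_pos rfl, if_false, if_true]
        omega
      · simp [h1, h2]
  have h2 := Finset.sum_congr rfl (fun i (_ : i ∈ Finset.univ) => key i)
  rw [Finset.sum_add_distrib, Finset.sum_add_distrib,
    Finset.sum_ite_eq' Finset.univ a fun _ => 1,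
    Finset.sum_ite_eq' Finset.univ c fun _ => 1] at h2
  simpa using h2

lemma norm_bSwap_bSwap {z y : Ω → ℕ} {a c : Ω} (hza : 1 ≤ z a) (hya : 1 ≤ y a) (hac : a ≠ c) :
    (∑ i, ((bSwap z a c i : ℤ) - bSwap y a c i).natAbs)
      = ∑ i, ((z i : ℤ) - y i).natAbs := by
  apply Finset.sum_congr rfl
  intro i _
  unfold bSwap
  by_cases h1 : i = a
  · rw [if_pos h1, if_pos h1]
    have h3 : 1 ≤ z i := by rw [h1]; exact hza
    have h4 : 1 ≤ y i := by rw [h1]; exact hya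
    omega
  · by_cases h2 : i = c
    · rw [if_neg h1, if_neg h1, if_pos h2, if_pos h2]
      omega
    · rw [if_neg h1, if_neg h1, if_neg h2, if_neg h2]

lemma walk_main {x : Ω → N → ℕ} (hxS : SStar b d v p x) {i0 : Ω}
    (hi0A : i0 ∈ Af b d v p) (hfull : sold x i0 = b i0) :
    ∃ xt, SStar b d v p xt ∧ sold xt i0 < b i0 ∧ ∀ j,
      (∀ i, xt i j = x i j) ∨
      ∃ a c, a ∈ Af b d v p ∧ c ∈ Af b d v p ∧ c ≠ i0 ∧ a ≠ c ∧
        mg v p a j = mg v p c j ∧ 1 ≤ x a j ∧ x c j < b c ∧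
        ∀ i, xt i j = bSwap (fun i' => x i' j) a c i := by
  obtain ⟨-, x0, hx0S, hx0sl⟩ := mem_Af.mp hi0A
  have hSne : {n | ∃ w, SStar b d v p w ∧ sold w i0 < b i0 ∧ distA x w = n}.Nonempty :=
    ⟨distA x x0, x0, hx0S, hx0sl, rfl⟩
  obtain ⟨x'', hx''S, hx''sl, hx''d⟩ := Nat.sInf_mem hSne
  have hmind : ∀ w, SStar b d v p w → sold w i0 < b i0 → distA x x'' ≤ distA x w := by
    intro w hw hsl
    rw [hx''d]
    exact Nat.sInf_le ⟨w, hw, hsl, rfl⟩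
  exact walk_aux hxS hx''S hi0A hfull hx''sl hmind (Fintype.card N) [] i0 (by simp) rfl
    (by simp) (by simp) (by simp) (by simp) (by simp)

/-- the key theorem : the set `Af` is empty at a minimal competitive price vector -/
lemma Af_empty (hp0 : ∀ i, 0 ≤ p i)
    (hmin : ∀ q : Ω → ℝ, Competitive b d v q → ∀ i, p i ≤ q i)
    (hne : ∃ x, Stable b d v p x) : Af b d v p = ∅ := by
  by_contra hAne'
  have hAne : (Af b d v p).Nonempty := Finset.nonempty_iff_ne_empty.mpr hAne'
  by_cases hcase : ∃ x, SStar b d v p x ∧ ∀ j z, InD b d v p j z →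
      ∑ i ∈ Af b d v p, z i ≤ ∑ i ∈ Af b d v p, x i j
  · obtain ⟨x, hxS, hmax⟩ := hcase
    exact eps_contra hp0 hmin hAne x hxS.1 hmax
  · push_neg at hcase
    have hWne : {n | ∃ x j z, SStar b d v p x ∧ InD b d v p j z ∧
        (∑ i ∈ Af b d v p, x i j) < (∑ i ∈ Af b d v p, z i) ∧
        (∑ i, ((z i : ℤ) - x i j).natAbs) = n}.Nonempty := by
      obtain ⟨x1, hx1⟩ := exists_sstar hne
      obtain ⟨j, z, hzD, hzgt⟩ := hcase x1 hx1
      exact ⟨_, x1, j, z, hx1, hzD, hzgt, rfl⟩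
    have hmin' : ∃ n0 : ℕ, (∃ x j z, SStar b d v p x ∧ InD b d v p j z ∧
        (∑ i ∈ Af b d v p, x i j) < (∑ i ∈ Af b d v p, z i) ∧
        (∑ i, ((z i : ℤ) - x i j).natAbs) = n0) ∧
        (∀ (x' : Ω → N → ℕ) (j' : N) (z' : Ω → ℕ), SStar b d v p x' →
          InD b d v p j' z' → (∑ i ∈ Af b d v p, x' i j') < ∑ i ∈ Af b d v p, z' i →
          n0 ≤ ∑ i, ((z' i : ℤ) - x' i j').natAbs) := by
      refine ⟨_, Nat.sInf_mem hWne, ?_⟩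
      intro x' j' z' h1 h2 h3
      exact Nat.sInf_le ⟨x', j', z', h1, h2, h3, rfl⟩
    obtain ⟨n0, ⟨x, j, z, hxS, hzD, hdef, hnorm⟩, hpool⟩ := hmin'
    by_cases hslackcase : ∃ i, i ∈ Af b d v p ∧ x i j < z i ∧ sold x i < b i
    · obtain ⟨istar, hiA, hwant, hsl⟩ := hslackcase
      exact slack_case hxS hzD hdef hiA hwant hsl hnorm hpool
    · push_neg at hslackcase
      have hex : ∃ i0, i0 ∈ Af b d v p ∧ x i0 j < z i0 := by
        by_contra hno
        push_neg at hno
        have := Finset.sum_le_sum (s := Af b d v p) (fun i hi => hno i hi)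
        omega
      obtain ⟨i0, hi0A, hwant⟩ := hex
      have hfull : sold x i0 = b i0 :=
        le_antisymm (hxS.1.1.1 i0) (hslackcase i0 hi0A hwant)
      obtain ⟨xt, hxtS, hxtsl, hxtj⟩ := walk_main hxS hi0A hfull
      rcases hxtj j with hsame | ⟨a, c, haA, hcA, hci0, hac, hmg, hxa, hxc, hbund⟩
      · -- j's bundle unchanged
        have hdef' : (∑ i ∈ Af b d v p, xt i j) < ∑ i ∈ Af b d v p, z i := by
          rw [Finset.sum_congr rfl fun i _ => hsame i]
          exact hdef
        have hwant' : xt i0 j < z i0 := by rw [hsame i0]; exact hwant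
        have hnorm' : (∑ i, ((z i : ℤ) - xt i j).natAbs) = n0 := by
          rw [Finset.sum_congr rfl fun i (_ : i ∈ Finset.univ) => by rw [hsame i]]
          exact hnorm
        exact slack_case hxtS hzD hdef' hi0A hwant' hxtsl hnorm' hpool
      · -- j's bundle swapped along the walk
        have hsumA : (∑ i ∈ Af b d v p, xt i j) = ∑ i ∈ Af b d v p, x i j := by
          rw [Finset.sum_congr rfl fun i _ => hbund i]
          exact sumS_bSwap haA hcA hxa hac
        have hdef' : (∑ i ∈ Af b d v p, xt i j) < ∑ i ∈ Af b d v p, z i := by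
          rw [hsumA]; exact hdef
        have hi0c : i0 ≠ c := fun h => hci0 h.symm
        have hwant' : xt i0 j < z i0 := by
          rw [hbund i0]
          unfold bSwap
          by_cases h1 : i0 = a
          · rw [if_pos h1]
            show x i0 j - 1 < z i0
            omega
          · rw [if_neg h1, if_neg hi0c]
            show x i0 j < z i0
            exact hwant
        have hnormbase : (∑ i, ((z i : ℤ) - xt i j).natAbs)
            = ∑ i, ((z i : ℤ) - bSwap (fun i' => x i' j) a c i).natAbs := by
          apply Finset.sum_congr rfl
          intro i _
          rw [hbund i]
        by_cases hCa : z a < x a j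
        · by_cases hCc : x c j < z c
          · -- strictly closer : contradiction with minimality
            have hnw : (∑ i, ((z i : ℤ) - (bSwap (fun i' => x i' j) a c i : ℕ)).natAbs) + 2
                = ∑ i, ((z i : ℤ) - (x i j : ℕ)).natAbs :=
              norm_swap (z := z) (y := fun i' => x i' j) hCa hCc hac
            have hle := hpool xt j z hxtS hzD hdef'
            rw [hnormbase] at hle
            omega
          · -- mixed : same norm
            have hnm := norm_mixed1 (z := z) (y := fun i' => x i' j) hCa (not_lt.mp hCc) hac
            have hnorm' : (∑ i, ((z i : ℤ) - xt i j).natAbs) = n0 := by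
              rw [hnormbase, hnm]; exact hnorm
            exact slack_case hxtS hzD hdef' hi0A hwant' hxtsl hnorm' hpool
        · by_cases hCc : x c j < z c
          · have hnm := norm_mixed2 (z := z) (y := fun i' => x i' j) (not_lt.mp hCa) hCc hac hxa
            have hnorm' : (∑ i, ((z i : ℤ) - xt i j).natAbs) = n0 := by
              rw [hnormbase, hnm]; exact hnorm
            exact slack_case hxtS hzD hdef' hi0A hwant' hxtsl hnorm' hpool
          · -- bump : adjust the witness bundle as well
            push_neg at hCa hCc
            have hza : 1 ≤ z a := le_trans hxa hCa
            have hzc : z c < b c := lt_of_le_of_lt hCc hxc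
            have hz'B : IsBundle b (d j) (bSwap z a c) := by
              refine ⟨fun i => ?_, ?_⟩
              · unfold bSwap
                by_cases h1 : i = a
                · rw [if_pos h1]
                  exact le_trans (Nat.sub_le _ _) (hzD.1.1 i)
                · rw [if_neg h1]
                  by_cases h2 : i = c
                  · rw [if_pos h2, h2]; omega
                  · rw [if_neg h2]; exact hzD.1.1 i
              · rw [sum_bSwap hza hac]; exact hzD.1.2
            have hz'D : InD b d v p j (bSwap z a c) := by
              apply InD_of_eq_utility hzD hz'B
              rw [utility_bSwap (v := fun i => v i j) (p := p) hza hac]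
              unfold mg at hmg
              linarith
            have hdef'' : (∑ i ∈ Af b d v p, xt i j) < ∑ i ∈ Af b d v p, bSwap z a c i := by
              rw [sumS_bSwap haA hcA hza hac, hsumA]
              exact hdef
            have hwant'' : xt i0 j < bSwap z a c i0 := by
              rw [hbund i0]
              unfold bSwap
              by_cases h1 : i0 = a
              · rw [if_pos h1, if_pos h1]
                have hx1 : 1 ≤ x i0 j := by rw [h1]; exact hxa
                show x i0 j - 1 < z i0 - 1
                omega
              · rw [if_neg h1, if_neg h1, if_neg hi0c, if_neg hi0c]
                show x i0 j < z i0
                exact hwant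
            have hnorm'' : (∑ i, ((bSwap z a c i : ℤ) - xt i j).natAbs) = n0 := by
              have hb2 : (∑ i, ((bSwap z a c i : ℤ) - xt i j).natAbs)
                  = ∑ i, ((bSwap z a c i : ℤ) - bSwap (fun i' => x i' j) a c i).natAbs := by
                apply Finset.sum_congr rfl
                intro i _
                rw [hbund i]
              rw [hb2, norm_bSwap_bSwap hza hxa hac]
              exact hnorm
            exact slack_case hxtS hz'D hdef'' hi0A hwant'' hxtsl hnorm'' hpool

end MCP

/-- at the componentwise minimum competitive prices there is a stable
allocation that completely sells every positively priced object and sells as much as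
possible. -/
theorem min_competitive_prices_admit_market_clearing_allocation
    {Ω N : Type*} [Fintype Ω] [Fintype N]
    (b : Ω → ℕ) (d : N → ℕ) (v : Ω → N → ℕ) (pstar : Ω → ℝ)
    (hcomp : Competitive b d v pstar)
    (hmin : ∀ q : Ω → ℝ, Competitive b d v q → ∀ i, pstar i ≤ q i) :
    ∃ x : Ω → N → ℕ, Feasible b d x ∧
      (∀ j, InDemand b (d j) (fun i => v i j) pstar (fun i => x i j)) ∧
      (∀ i, 0 < pstar i → ∑ j, x i j = b i) ∧
      ∑ i, ∑ j, x i j = min (∑ i, b i) (∑ j, d j) := by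
  classical
  obtain ⟨hp0, hxe⟩ := hcomp
  obtain ⟨xstar, hxstar⟩ := MCP.exists_sstar (b := b) (d := d) (v := v) (p := pstar) hxe
  have hAe := MCP.Af_empty (b := b) (d := d) (v := v) (p := pstar) hp0 hmin hxe
  obtain ⟨h2, h3⟩ := MCP.endgame hp0 hAe hxstar
  exact ⟨xstar, hxstar.1.1, hxstar.1.2, fun i hpi => h2 i hpi, h3⟩
end
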